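/- arXiv:math/0510631 — 5 statements merged into one kernel-verified Lean document; each statement's English description precedes it below -/
import Mathlib

section
/- Let Γ = A *_C B and let γ ∈ Γ be cyclically reduced. If γ = h c h^{-1} for some c ∈ C and some h ∈ Γ with reduced form h = h_1 h_2 ⋯ h_{n+1} (n ≥ 0), then γ lies in one of the factors A or B, and there exists a finite sequence c_0, c_1, …, c_n, c_{n+1} of elements of Γ with c_0 = c, c_{n+1} = γ, c_i ∈ C for all 0 ≤ i ≤ n, and such that for each i = 0, …, n the element h_{i+1} conjugates c_i to c_{i+1}, the conjugation taking place inside a single factor A or B. -/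
/-!
Internal characterization of the amalgamated free product `Γ = A *_C B`:
`A` and `B` are subgroups of `Γ` generating `Γ`, the amalgamated subgroup is
`C = A ⊓ B`, and (normal form theorem) the product of any nonempty reduced
sequence is nontrivial.
-/

variable {Γ : Type*} [Group Γ]

/-- `x` and `y` lie in different factors among `A`, `B`. -/
def DiffFactors (A B : Subgroup Γ) (x y : Γ) : Prop :=
  ¬(x ∈ A ∧ y ∈ A) ∧ ¬(x ∈ B ∧ y ∈ B)

/-- A reduced sequence: every entry lies in `(A ∪ B) \ (A ⊓ B)` and consecutive
entries lie in different factors. -/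
def ReducedSeq (A B : Subgroup Γ) (l : List Γ) : Prop :=
  (∀ g ∈ l, (g ∈ A ∨ g ∈ B) ∧ ¬(g ∈ A ∧ g ∈ B)) ∧ l.Chain' (DiffFactors A B)

/-- `Γ` is the amalgamated free product of its subgroups `A` and `B`
along `C = A ⊓ B`. -/
def IsAmalgam (A B : Subgroup Γ) : Prop :=
  A ⊔ B = ⊤ ∧ ∀ l : List Γ, ReducedSeq A B l → l ≠ [] → l.prod ≠ 1

/-- `g` is cyclically reduced: it has length 1 (it lies in a factor), or it has
a reduced form of length `≥ 2` whose first and last entries lie in different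
factors. -/
def AmCyclicallyReduced (A B : Subgroup Γ) (g : Γ) : Prop :=
  (g ∈ A ∨ g ∈ B) ∨
    ∃ l : List Γ, ReducedSeq A B l ∧ l.prod = g ∧ 2 ≤ l.length ∧
      ∃ x y, l.head? = some x ∧ l.getLast? = some y ∧ DiffFactors A B x y

/-! ### Auxiliary lemmas -/

theorem DiffFactors.symm' {A B : Subgroup Γ} {x y : Γ} (h : DiffFactors A B x y) :
    DiffFactors A B y x :=
  ⟨fun hh => h.1 ⟨hh.2, hh.1⟩, fun hh => h.2 ⟨hh.2, hh.1⟩⟩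

theorem DiffFactors.swap {A B : Subgroup Γ} {x y : Γ} (h : DiffFactors A B x y) :
    DiffFactors B A x y := ⟨h.2, h.1⟩

theorem DiffFactors.inv_right {A B : Subgroup Γ} {x y : Γ} (h : DiffFactors A B x y) :
    DiffFactors A B x y⁻¹ :=
  ⟨fun hh => h.1 ⟨hh.1, inv_mem_iff.mp hh.2⟩, fun hh => h.2 ⟨hh.1, inv_mem_iff.mp hh.2⟩⟩

theorem DiffFactors.inv_left {A B : Subgroup Γ} {x y : Γ} (h : DiffFactors A B x y) :
    DiffFactors A B x⁻¹ y :=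
  ⟨fun hh => h.1 ⟨inv_mem_iff.mp hh.1, hh.2⟩, fun hh => h.2 ⟨inv_mem_iff.mp hh.1, hh.2⟩⟩

theorem ReducedSeq.swap {A B : Subgroup Γ} {l : List Γ} (h : ReducedSeq A B l) :
    ReducedSeq B A l :=
  ⟨fun g hg => ⟨(h.1 g hg).1.symm, fun hh => (h.1 g hg).2 ⟨hh.2, hh.1⟩⟩,
    List.IsChain.imp (fun _ _ hd => hd.swap) h.2⟩

theorem IsAmalgam.swap' {A B : Subgroup Γ} (h : IsAmalgam A B) : IsAmalgam B A :=
  ⟨by rw [sup_comm]; exact h.1, fun l hl => h.2 l hl.swap⟩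

theorem AmCyclicallyReduced.swap {A B : Subgroup Γ} {g : Γ}
    (h : AmCyclicallyReduced A B g) : AmCyclicallyReduced B A g := by
  rcases h with h | ⟨l, h1, h2, h3, x, y, hx, hy, hd⟩
  · exact Or.inl h.symm
  · exact Or.inr ⟨l, h1.swap, h2, h3, x, y, hx, hy, hd.swap⟩

theorem ReducedSeq.revInv {A B : Subgroup Γ} {l : List Γ} (h : ReducedSeq A B l) :
    ReducedSeq A B ((l.map fun x => x⁻¹).reverse) := by
  constructor
  · intro g hg
    rw [List.mem_reverse, List.mem_map] at hg
    obtain ⟨a, ha, rfl⟩ := hg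
    obtain ⟨h1, h2⟩ := h.1 a ha
    exact ⟨h1.imp inv_mem inv_mem, fun hh => h2 ⟨inv_mem_iff.mp hh.1, inv_mem_iff.mp hh.2⟩⟩
  · rw [List.Chain', List.isChain_reverse, List.isChain_map]
    exact List.IsChain.imp (fun a b hd => hd.symm'.inv_left.inv_right) h.2

theorem ReducedSeq.prefix {A B : Subgroup Γ} {l m : List Γ} (h : ReducedSeq A B l)
    (hm : m <+: l) : ReducedSeq A B m :=
  ⟨fun g hg => h.1 g (hm.subset hg), h.2.prefix hm⟩

/-- The product of a reduced sequence of length at least 2 is not in `A`. -/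
theorem reducedSeq_prod_notMem {A B : Subgroup Γ} (hAB : IsAmalgam A B) (l : List Γ)
    (hl : ReducedSeq A B l) (hlen : 2 ≤ l.length) : l.prod ∉ A := by
  intro hp
  match l, hlen with
  | g1 :: g2 :: t, _ =>
  set p := (g1 :: g2 :: t).prod with hpdef
  have hg1 := hl.1 g1 (by simp)
  have hg2 := hl.1 g2 (by simp)
  obtain ⟨hd12, hch2⟩ := List.isChain_cons_cons.mp hl.2
  have hprodeq : p = g1 * (g2 * t.prod) := by rw [hpdef]; simp [List.prod_cons, mul_assoc]
  by_cases hg1A : g1 ∈ A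
  · have hg1B : g1 ∉ B := fun hb => hg1.2 ⟨hg1A, hb⟩
    have hcA : p⁻¹ * g1 ∈ A := mul_mem (inv_mem hp) hg1A
    by_cases hcB : p⁻¹ * g1 ∈ B
    · -- p⁻¹ g1 ∈ C : absorb into g2
      refine hAB.2 ((p⁻¹ * g1 * g2) :: t) ⟨?_, ?_⟩ (by simp) ?_
      · intro g hg
        rcases List.mem_cons.mp hg with rfl | hgt
        · refine ⟨hg2.1.imp (fun m => mul_mem hcA m) (fun m => mul_mem hcB m), fun hh => hg2.2
            ⟨(mul_mem_cancel_left hcA).mp hh.1, (mul_mem_cancel_left hcB).mp hh.2⟩⟩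
        · exact hl.1 g (by simp [hgt])
      · rw [List.isChain_cons] at hch2; rw [List.Chain', List.isChain_cons]
        refine ⟨fun y hy => ?_, hch2.2⟩
        have hd := hch2.1 y hy
        exact ⟨fun hh => hd.1 ⟨(mul_mem_cancel_left hcA).mp hh.1, hh.2⟩,
          fun hh => hd.2 ⟨(mul_mem_cancel_left hcB).mp hh.1, hh.2⟩⟩
      · rw [List.prod_cons]
        rw [hprodeq]
        group
    · -- p⁻¹ g1 ∉ C : new reduced word (p⁻¹ g1) :: g2 :: t
      refine hAB.2 ((p⁻¹ * g1) :: g2 :: t) ⟨?_, ?_⟩ (by simp) ?_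
      · intro g hg
        rcases List.mem_cons.mp hg with rfl | hgt
        · exact ⟨Or.inl hcA, fun hh => hcB hh.2⟩
        · exact hl.1 g (by simp [hgt])
      · rw [List.Chain', List.isChain_cons_cons]
        exact ⟨⟨fun hh => hd12.1 ⟨hg1A, hh.2⟩, fun hh => hcB hh.1⟩, hch2⟩
      · rw [List.prod_cons, List.prod_cons, hprodeq]
        group
  · have hg1B : g1 ∈ B := hg1.1.resolve_left hg1A
    by_cases hpB : p ∈ B
    · have hcB : p⁻¹ * g1 ∈ B := mul_mem (inv_mem hpB) hg1B
      have hcA : p⁻¹ * g1 ∉ A := fun ha => hg1A (by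
        have : p * (p⁻¹ * g1) ∈ A := mul_mem hp ha
        simpa using this)
      refine hAB.2 ((p⁻¹ * g1) :: g2 :: t) ⟨?_, ?_⟩ (by simp) ?_
      · intro g hg
        rcases List.mem_cons.mp hg with rfl | hgt
        · exact ⟨Or.inr hcB, fun hh => hcA hh.1⟩
        · exact hl.1 g (by simp [hgt])
      · rw [List.Chain', List.isChain_cons_cons]
        exact ⟨⟨fun hh => hcA hh.1, fun hh => hd12.2 ⟨hg1B, hh.2⟩⟩, hch2⟩
      · rw [List.prod_cons, List.prod_cons, hprodeq]
        group
    · refine hAB.2 (p⁻¹ :: g1 :: g2 :: t) ⟨?_, ?_⟩ (by simp) ?_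
      · intro g hg
        rcases List.mem_cons.mp hg with rfl | hgt
        · exact ⟨Or.inl (inv_mem hp), fun hh => hpB (inv_mem_iff.mp hh.2)⟩
        · exact hl.1 g hgt
      · rw [List.Chain', List.isChain_cons_cons]
        exact ⟨⟨fun hh => hg1A hh.2, fun hh => hpB (inv_mem_iff.mp hh.1)⟩, hl.2⟩
      · rw [List.prod_cons, ← hpdef]
        group

theorem heads_aux {A B : Subgroup Γ} (hAB : IsAmalgam A B) {l m : List Γ}
    (hl : ReducedSeq A B l) (hm : ReducedSeq A B m) (hpr : l.prod = m.prod)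
    {x y : Γ} (hx : l.head? = some x) (hy : m.head? = some y)
    (hxA : x ∈ A) (hxB : x ∉ B) (hyB : y ∈ B) (hyA : y ∉ A) : False := by
  have hlne : l ≠ [] := fun h => by simp [h] at hx
  set w : List Γ := (m.map fun z => z⁻¹).reverse ++ l with hwdef
  have hmr := hm.revInv
  have hred : ReducedSeq A B w := by
    refine ⟨fun g hg => (List.mem_append.mp hg).elim (hmr.1 g) (hl.1 g), ?_⟩
    rw [List.Chain', List.isChain_append]
    refine ⟨hmr.2, hl.2, ?_⟩
    intro u hu v hv
    have h1 : ((m.map fun z => z⁻¹).reverse).getLast? = some y⁻¹ := by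
      rw [List.getLast?_reverse, List.head?_map, hy]; rfl
    rw [h1, Option.mem_some_iff] at hu
    rw [hx, Option.mem_some_iff] at hv
    subst hu; subst hv
    exact ⟨fun hh => hyA (inv_mem_iff.mp hh.1), fun hh => hxB hh.2⟩
  have hwprod : w.prod = 1 := by
    rw [hwdef, List.prod_append, ← List.prod_inv_reverse, hpr]
    simp
  exact hAB.2 w hred (by simp [hwdef, hlne]) hwprod

theorem heads_same {A B : Subgroup Γ} (hAB : IsAmalgam A B) {l m : List Γ}
    (hl : ReducedSeq A B l) (hm : ReducedSeq A B m) (hpr : l.prod = m.prod)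
    {x y : Γ} (hx : l.head? = some x) (hy : m.head? = some y) :
    (x ∈ A ↔ y ∈ A) ∧ (x ∈ B ↔ y ∈ B) := by
  have hxl : x ∈ l := List.mem_of_mem_head? (by rw [hx]; rfl)
  have hym : y ∈ m := List.mem_of_mem_head? (by rw [hy]; rfl)
  obtain ⟨hx1, hx2⟩ := hl.1 x hxl
  obtain ⟨hy1, hy2⟩ := hm.1 y hym
  have hxe : (x ∈ A ∧ x ∉ B) ∨ (x ∈ B ∧ x ∉ A) := by tauto
  have hye : (y ∈ A ∧ y ∉ B) ∨ (y ∈ B ∧ y ∉ A) := by tauto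
  rcases hxe with ⟨hx3, hx4⟩ | ⟨hx3, hx4⟩ <;> rcases hye with ⟨hy3, hy4⟩ | ⟨hy3, hy4⟩
  · exact ⟨iff_of_true hx3 hy3, iff_of_false hx4 hy4⟩
  · exact absurd (heads_aux hAB hl hm hpr hx hy hx3 hx4 hy3 hy4) not_false
  · exact absurd (heads_aux hAB hm hl hpr.symm hy hx hy3 hy4 hx3 hx4) not_false
  · exact ⟨iff_of_false hx4 hy4, iff_of_true hx3 hy3⟩

theorem lasts_same {A B : Subgroup Γ} (hAB : IsAmalgam A B) {l m : List Γ}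
    (hl : ReducedSeq A B l) (hm : ReducedSeq A B m) (hpr : l.prod = m.prod)
    {x y : Γ} (hx : l.getLast? = some x) (hy : m.getLast? = some y) :
    (x ∈ A ↔ y ∈ A) ∧ (x ∈ B ↔ y ∈ B) := by
  have h1 : ((l.map fun z => z⁻¹).reverse).head? = some x⁻¹ := by
    rw [List.head?_reverse, List.getLast?_map, hx]; rfl
  have h2 : ((m.map fun z => z⁻¹).reverse).head? = some y⁻¹ := by
    rw [List.head?_reverse, List.getLast?_map, hy]; rfl
  have h3 : ((l.map fun z => z⁻¹).reverse).prod = ((m.map fun z => z⁻¹).reverse).prod := by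
    rw [← List.prod_inv_reverse, ← List.prod_inv_reverse, hpr]
  have := heads_same hAB hl.revInv hm.revInv h3 h1 h2
  simpa [inv_mem_iff] using this

/-- If `γ` is cyclically reduced, it cannot be written as `P.prod * x * P.prod⁻¹` with
`P ++ [x]` reduced and `P` nonempty. -/
theorem no_long_conj {A B : Subgroup Γ} (hAB : IsAmalgam A B) {γ x : Γ}
    (hcyc : AmCyclicallyReduced A B γ) {P : List Γ}
    (hP : ReducedSeq A B (P ++ [x])) (hPne : P ≠ [])
    (hγ : γ = P.prod * x * P.prod⁻¹) : False := by
  obtain ⟨p, P', rfl⟩ : ∃ p P', P = p :: P' := by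
    cases P with
    | nil => exact absurd rfl hPne
    | cons a b => exact ⟨a, b, rfl⟩
  set P : List Γ := p :: P' with hPdef
  set w : List Γ := (P ++ [x]) ++ (P.map fun z => z⁻¹).reverse with hwdef
  have hPred : ReducedSeq A B P := hP.prefix (List.prefix_append _ _)
  have hPlast : P.getLast? = some (P.getLast (by simp [hPdef])) :=
    List.getLast?_eq_getLast _
  have hjunc1 : DiffFactors A B (P.getLast (by simp [hPdef])) x := by
    have := (List.isChain_append.mp hP.2).2.2
    exact this _ (by rw [hPlast]; rfl) x rfl
  have hred : ReducedSeq A B w := by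
    have hri := hPred.revInv
    refine ⟨fun g hg => (List.mem_append.mp hg).elim (hP.1 g) (hri.1 g), ?_⟩
    rw [List.Chain', List.isChain_append]
    refine ⟨hP.2, hri.2, ?_⟩
    intro u hu v hv
    have h1 : (P ++ [x]).getLast? = some x := List.getLast?_concat
    have h2 : ((P.map fun z => z⁻¹).reverse).head? = some (P.getLast (by simp [hPdef]))⁻¹ := by
      rw [List.head?_reverse, List.getLast?_map, hPlast]; rfl
    rw [h1, Option.mem_some_iff] at hu
    rw [h2, Option.mem_some_iff] at hv
    subst hu; subst hv
    exact hjunc1.symm'.inv_right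
  have hwprod : w.prod = γ := by
    rw [hwdef, List.prod_append, List.prod_append, ← List.prod_inv_reverse, hγ]
    simp [mul_assoc]
  have hwlen : 2 ≤ w.length := by
    rw [hwdef]
    simp only [List.length_append, List.length_reverse, List.length_map, hPdef,
      List.length_cons]
    omega
  have hwhead : w.head? = some p := by simp [hwdef, hPdef]
  have hrevsplit : ((P.map fun z => z⁻¹).reverse) =
      ((P'.map fun z => z⁻¹).reverse) ++ [p⁻¹] := by
    simp [hPdef]
  have hwlast : w.getLast? = some p⁻¹ := by
    rw [hwdef, hrevsplit, ← List.append_assoc, List.getLast?_concat]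
  obtain ⟨hpAB, hpnot⟩ := hPred.1 p (by simp [hPdef])
  rcases hcyc with hfac | ⟨l, hlred, hlprod, _, a, b, ha, hb, hDab⟩
  · rcases hfac with hA | hB
    · exact reducedSeq_prod_notMem hAB w hred hwlen (hwprod ▸ hA)
    · exact reducedSeq_prod_notMem hAB.swap' w hred.swap hwlen (hwprod ▸ hB)
  · have h1 := heads_same hAB hlred hred (by rw [hlprod, hwprod]) ha hwhead
    have h2 := lasts_same hAB hlred hred (by rw [hlprod, hwprod]) hb hwlast
    rcases hpAB with hpA | hpB
    · exact hDab.1 ⟨h1.1.mpr hpA, h2.1.mpr (inv_mem hpA)⟩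
    · exact hDab.2 ⟨h1.2.mpr hpB, h2.2.mpr (inv_mem hpB)⟩

/-- Key step: in the situation of the main theorem, if the partial conjugate `d`
lies in `A` but not in `B`, we get a contradiction with cyclic reducedness. -/
theorem key_step {A B : Subgroup Γ} (hAB : IsAmalgam A B) {γ : Γ}
    (hcyc : AmCyclicallyReduced A B γ) {n : ℕ} {hs : Fin (n + 1) → Γ}
    (hred : ReducedSeq A B (List.ofFn hs)) {j : Fin (n + 1)} (hj : 1 ≤ (j : ℕ))
    {d : Γ} (hdA : d ∈ A) (hdB : d ∉ B)
    (hγ : γ = ((List.ofFn hs).take (j : ℕ)).prod * d *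
      (((List.ofFn hs).take (j : ℕ)).prod)⁻¹)
    (hjA : hs j ∈ A) : False := by
  have hLlen : (List.ofFn hs).length = n + 1 := by simp
  have hjlt : (j : ℕ) < n + 1 := j.isLt
  have hPlen : ((List.ofFn hs).take (j : ℕ)).length = (j : ℕ) := by
    rw [List.length_take, hLlen]; omega
  have hPne : (List.ofFn hs).take (j : ℕ) ≠ [] := by
    intro hnil
    rw [hnil] at hPlen
    simp only [List.length_nil] at hPlen
    omega
  -- the last entry of P is hs (j-1)
  have hlast : ((List.ofFn hs).take (j : ℕ)).getLast? =
      some (hs ⟨(j : ℕ) - 1, by omega⟩) := by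
    have hidx : (j : ℕ) - 1 < (List.ofFn hs).length := by rw [hLlen]; omega
    have hgetj1 : (List.ofFn hs)[(j : ℕ) - 1]'hidx = hs ⟨(j : ℕ) - 1, by omega⟩ := by
      simp only [List.getElem_ofFn]
    rw [← hgetj1, List.getLast?_eq_getLast hPne, List.getLast_eq_getElem]
    congr 1
    rw [List.getElem_take]
    congr 1
    simp only [List.length_take, hLlen]
    omega
  -- consecutive entries of L are in different factors
  have hcons : DiffFactors A B (hs ⟨(j : ℕ) - 1, by omega⟩) (hs j) := by
    have hch := List.isChain_iff_getElem.mp hred.2 ((j : ℕ) - 1) (by simp; omega)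
    simp only [List.get_eq_getElem, List.getElem_ofFn] at hch
    convert hch using 2
    all_goals exact Fin.ext (by simp; omega)
  have hlastnA : hs ⟨(j : ℕ) - 1, by omega⟩ ∉ A := fun ha => hcons.1 ⟨ha, hjA⟩
  have hPx : ReducedSeq A B ((List.ofFn hs).take (j : ℕ) ++ [d]) := by
    refine ⟨?_, ?_⟩
    · intro g hg
      rcases List.mem_append.mp hg with hgP | hgd
      · exact hred.1 g ((List.take_prefix _ _).subset hgP)
      · rw [List.mem_singleton] at hgd; subst hgd
        exact ⟨Or.inl hdA, fun hh => hdB hh.2⟩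
    · rw [List.Chain', List.isChain_append]
      refine ⟨hred.2.prefix (List.take_prefix _ _), List.isChain_singleton _, ?_⟩
      intro u hu v hv
      rw [hlast, Option.mem_some_iff] at hu
      rw [List.head?_cons, Option.mem_some_iff] at hv
      subst hu; subst hv
      exact ⟨fun hh => hlastnA hh.1, fun hh => hdB hh.2⟩
  exact no_long_conj hAB hcyc hPx hPne hγ

/-- Conjugation theorem in an amalgam, case (i): if the cyclically reduced
element `γ` equals `h * co * h⁻¹` with `co ∈ C = A ⊓ B` and `h` of reduced form
`h_1 h_2 ⋯ h_{n+1}`, then `γ` lies in a factor and there is a chain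
`co = c_0, c_1, …, c_n, c_{n+1} = γ` of elements of `C` (except possibly the
last) in which consecutive terms are conjugate by one of the `h_i`, the
conjugation taking place inside a single factor. -/
theorem amalgam_conj_into_amalgamated_subgroup (A B : Subgroup Γ)
    (hAB : IsAmalgam A B) (γ co h : Γ) (n : ℕ) (hs : Fin (n + 1) → Γ)
    (hred : ReducedSeq A B (List.ofFn hs))
    (hprod : (List.ofFn hs).prod = h)
    (hcyc : AmCyclicallyReduced A B γ)
    (hco : co ∈ A ⊓ B)
    (hconj : γ = h * co * h⁻¹) :
    (γ ∈ A ∨ γ ∈ B) ∧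
      ∃ c : ℕ → Γ, c 0 = co ∧ c (n + 1) = γ ∧ (∀ i ≤ n, c i ∈ A ⊓ B) ∧
        ∀ i : Fin (n + 1),
          c (n + 1 - (i : ℕ)) = hs i * c (n - (i : ℕ)) * (hs i)⁻¹ ∧
          ((hs i ∈ A ∧ c (n - (i : ℕ)) ∈ A ∧ c (n + 1 - (i : ℕ)) ∈ A) ∨
           (hs i ∈ B ∧ c (n - (i : ℕ)) ∈ B ∧ c (n + 1 - (i : ℕ)) ∈ B)) := by
  classical
  set L : List Γ := List.ofFn hs with hL
  have hLlen : L.length = n + 1 := by simp [hL]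
  set c : ℕ → Γ := fun k => (L.drop (n + 1 - k)).prod * co * ((L.drop (n + 1 - k)).prod)⁻¹
    with hc
  have hdrop : ∀ i : Fin (n + 1), L.drop (i : ℕ) = hs i :: L.drop ((i : ℕ) + 1) := by
    intro i
    have hi : (i : ℕ) < L.length := by rw [hLlen]; exact i.isLt
    rw [List.drop_eq_getElem_cons hi]
    congr 1
    simp only [hL, List.getElem_ofFn, Fin.eta]
  have hrec : ∀ i : Fin (n + 1), c (n + 1 - (i : ℕ)) = hs i * c (n - (i : ℕ)) * (hs i)⁻¹ := by
    intro i
    have hilt : (i : ℕ) < n + 1 := i.isLt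
    have h1 : n + 1 - (n + 1 - (i : ℕ)) = (i : ℕ) := by omega
    have h2 : n + 1 - (n - (i : ℕ)) = (i : ℕ) + 1 := by omega
    rw [hc]
    simp only [h1, h2, hdrop i, List.prod_cons]
    group
  have hc0 : c 0 = co := by
    rw [hc]
    simp only [Nat.sub_zero]
    rw [List.drop_eq_nil_of_le (by omega)]
    simp
  have hcn : c (n + 1) = γ := by
    rw [hc]
    simp only [Nat.sub_self, List.drop_zero]
    rw [hprod]
    exact hconj.symm
  have hsmem : ∀ i : Fin (n + 1), (hs i ∈ A ∨ hs i ∈ B) ∧ ¬(hs i ∈ A ∧ hs i ∈ B) := by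
    intro i
    exact hred.1 (hs i) (by rw [List.mem_ofFn]; exact ⟨i, rfl⟩)
  have hkey : ∀ k, k ≤ n → c k ∈ A ⊓ B := by
    intro k
    induction k with
    | zero => intro _; rw [hc0]; exact hco
    | succ k ih =>
      intro hk1
      obtain ⟨hckA, hckB⟩ := Subgroup.mem_inf.mp (ih (by omega))
      set j : Fin (n + 1) := ⟨n - k, by omega⟩ with hjdef
      have hjval : (j : ℕ) = n - k := rfl
      have hj1 : n + 1 - (j : ℕ) = k + 1 := by rw [hjval]; omega
      have hj2 : n - (j : ℕ) = k := by rw [hjval]; omega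
      have hrecj := hrec j
      rw [hj1, hj2] at hrecj
      have hjge : 1 ≤ (j : ℕ) := by rw [hjval]; omega
      have hγexp : γ = (L.take (j : ℕ)).prod * c (k + 1) *
          ((L.take (j : ℕ)).prod)⁻¹ := by
        have hsplit : (L.take (j : ℕ)).prod * (L.drop (j : ℕ)).prod = h := by
          rw [← List.prod_append, List.take_append_drop]
          exact hprod
        have hck1 : c (k + 1) = (L.drop (j : ℕ)).prod * co * ((L.drop (j : ℕ)).prod)⁻¹ := by
          have hidx : n + 1 - (k + 1) = (j : ℕ) := by rw [hjval]; omega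
          simp only [hc, hidx]
        rw [hck1, hconj, ← hsplit]
        group
      rcases (hsmem j).1 with hjA | hjB
      · have hjB : hs j ∉ B := fun hb => (hsmem j).2 ⟨hjA, hb⟩
        have hck1A : c (k + 1) ∈ A := by
          rw [hrecj]; exact mul_mem (mul_mem hjA hckA) (inv_mem hjA)
        refine Subgroup.mem_inf.mpr ⟨hck1A, ?_⟩
        by_contra hnB
        exact key_step hAB hcyc hred hjge hck1A hnB hγexp hjA
      · have hjA : hs j ∉ A := fun ha => (hsmem j).2 ⟨ha, hjB⟩
        have hck1B : c (k + 1) ∈ B := by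
          rw [hrecj]; exact mul_mem (mul_mem hjB hckB) (inv_mem hjB)
        refine Subgroup.mem_inf.mpr ⟨?_, hck1B⟩
        by_contra hnA
        exact key_step hAB.swap' hcyc.swap hred.swap hjge hck1B hnA hγexp hjB
  have hγfac : γ ∈ A ∨ γ ∈ B := by
    have h0 := hrec ⟨0, by omega⟩
    simp only [Fin.val_mk, Nat.sub_zero] at h0
    rw [hcn] at h0
    obtain ⟨hA', hB'⟩ := Subgroup.mem_inf.mp (hkey n le_rfl)
    rcases (hsmem ⟨0, by omega⟩).1 with hA | hB
    · exact Or.inl (by rw [h0]; exact mul_mem (mul_mem hA hA') (inv_mem hA))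
    · exact Or.inr (by rw [h0]; exact mul_mem (mul_mem hB hB') (inv_mem hB))
  refine ⟨hγfac, c, hc0, hcn, hkey, ?_⟩
  intro i
  have hilt : (i : ℕ) < n + 1 := i.isLt
  refine ⟨hrec i, ?_⟩
  obtain ⟨hA', hB'⟩ := Subgroup.mem_inf.mp (hkey (n - (i : ℕ)) (by omega))
  rcases (hsmem i).1 with hA | hB
  · exact Or.inl ⟨hA, hA', by rw [hrec i]; exact mul_mem (mul_mem hA hA') (inv_mem hA)⟩
  · exact Or.inr ⟨hB, hB', by rw [hrec i]; exact mul_mem (mul_mem hB hB') (inv_mem hB)⟩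
end

section
/- Let Γ = A *_C B and let γ ∈ Γ be cyclically reduced. If γ is conjugate in Γ to an element γ' lying in one of the factors A or B, and γ is not conjugate in Γ to any element of C, then γ and γ' lie in the same factor and are conjugate by an element of that factor. -/
/-!
Internal characterization of the amalgamated free product `Γ = A *_C B`:
`A` and `B` are subgroups of `Γ` generating `Γ`, the amalgamated subgroup is
`C = A ⊓ B`, and (normal form theorem) the product of any nonempty reduced
sequence is nontrivial.
-/

variable {Γ : Type*} [Group Γ]

section AmalgamAux


variable {A B : Subgroup Γ}

lemma DF_symm {x y : Γ} (h : DiffFactors A B x y) : DiffFactors A B y x :=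
  ⟨fun ⟨p, q⟩ => h.1 ⟨q, p⟩, fun ⟨p, q⟩ => h.2 ⟨q, p⟩⟩

lemma DF_inv_inv {x y : Γ} (h : DiffFactors A B x y) : DiffFactors A B y⁻¹ x⁻¹ := by
  refine ⟨fun ⟨p, q⟩ => h.1 ⟨?_, ?_⟩, fun ⟨p, q⟩ => h.2 ⟨?_, ?_⟩⟩
  · simpa using q
  · simpa using p
  · simpa using q
  · simpa using p

lemma DF_inv_right {x y : Γ} (h : DiffFactors A B x y) : DiffFactors A B x y⁻¹ := by
  refine ⟨fun ⟨p, q⟩ => h.1 ⟨p, ?_⟩, fun ⟨p, q⟩ => h.2 ⟨p, ?_⟩⟩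
  · simpa using q
  · simpa using q

lemma DF_congr_left {y a z : Γ} (hf : (y ∈ A ∧ a ∈ A) ∨ (y ∈ B ∧ a ∈ B))
    (hy : ¬(y ∈ A ∧ y ∈ B)) (h : DiffFactors A B a z) : DiffFactors A B y z := by
  rcases hf with ⟨yA, aA⟩ | ⟨yB, aB⟩
  · exact ⟨fun ⟨_, zA⟩ => h.1 ⟨aA, zA⟩, fun ⟨yB', _⟩ => hy ⟨yA, yB'⟩⟩
  · exact ⟨fun ⟨yA', _⟩ => hy ⟨yA', yB⟩, fun ⟨_, zB⟩ => h.2 ⟨aB, zB⟩⟩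

lemma DF_congr_right {x a y : Γ} (hf : (y ∈ A ∧ a ∈ A) ∨ (y ∈ B ∧ a ∈ B))
    (hy : ¬(y ∈ A ∧ y ∈ B)) (h : DiffFactors A B x a) : DiffFactors A B x y :=
  DF_symm (DF_congr_left hf hy (DF_symm h))

lemma reducedSeq_revinv {l : List Γ} (h : ReducedSeq A B l) :
    ReducedSeq A B (l.map (fun z => z⁻¹)).reverse := by
  constructor
  · intro g hg
    simp only [List.mem_reverse, List.mem_map] at hg
    obtain ⟨a, ha, rfl⟩ := hg
    have := h.1 a ha
    constructor
    · rcases this.1 with h' | h'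
      · exact Or.inl (by simpa using h')
      · exact Or.inr (by simpa using h')
    · intro ⟨p, q⟩
      exact this.2 ⟨by simpa using p, by simpa using q⟩
  · show List.IsChain _ _
    rw [List.isChain_reverse, List.isChain_map]
    exact List.IsChain.imp (fun a b hab => DF_inv_inv hab) h.2

lemma prep (hAB : IsAmalgam A B) :
    ∀ l : List Γ, ReducedSeq A B l → ∀ x : Γ, x ∈ A ∨ x ∈ B →
      (x * l.prod ∈ A ⊓ B ∧ l.length ≤ 1) ∨
      ∃ l', ReducedSeq A B l' ∧ l' ≠ [] ∧ l'.prod = x * l.prod := by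
  intro l
  induction l with
  | nil =>
    intro _ x hx
    by_cases hc : x ∈ A ∧ x ∈ B
    · exact Or.inl ⟨by simpa using Subgroup.mem_inf.mpr hc, by simp⟩
    · refine Or.inr ⟨[x], ⟨?_, List.isChain_singleton _⟩, by simp, by simp⟩
      intro g hg
      rw [List.mem_singleton] at hg
      subst hg
      exact ⟨hx, hc⟩
  | cons h t ih =>
    intro hred x hx
    have hredt : ReducedSeq A B t :=
      ⟨fun g hg => hred.1 g (List.mem_cons_of_mem _ hg), hred.2.tail⟩
    have hhp := hred.1 h List.mem_cons_self
    by_cases hf : (x ∈ A ∧ h ∈ A) ∨ (x ∈ B ∧ h ∈ B)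
    · -- x and h lie in a common factor; merge
      have hyF : x * h ∈ A ∨ x * h ∈ B := by
        rcases hf with ⟨p, q⟩ | ⟨p, q⟩
        · exact Or.inl (mul_mem p q)
        · exact Or.inr (mul_mem p q)
      by_cases hyC : x * h ∈ A ∧ x * h ∈ B
      · -- merged element lies in C: recurse into t
        rcases ih hredt (x * h) hyF with ⟨hc, hlen⟩ | ⟨l', hl', hne, hp⟩
        · -- t has length ≤ 1
          match t, hlen with
          | [], _ =>
            refine Or.inl ⟨by simpa [mul_assoc] using hc, by simp⟩
          | [h₂], _ =>
            exfalso
            have hc' := Subgroup.mem_inf.mp hc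
            simp only [List.prod_cons, List.prod_nil, mul_one] at hc'
            have hh₂ := hred.1 h₂ (by simp)
            have e : (x * h)⁻¹ * (x * h * h₂) = h₂ := by group
            refine hh₂.2 ⟨?_, ?_⟩
            · have := mul_mem (inv_mem hyC.1) hc'.1
              rwa [e] at this
            · have := mul_mem (inv_mem hyC.2) hc'.2
              rwa [e] at this
        · exact Or.inr ⟨l', hl', hne, by rw [hp]; simp [mul_assoc]⟩
      · -- merged element is pure: replace the head
        refine Or.inr ⟨(x * h) :: t, ⟨?_, ?_⟩, by simp, by simp [mul_assoc]⟩
        · intro g hg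
          rcases List.mem_cons.mp hg with rfl | hg'
          · exact ⟨hyF, hyC⟩
          · exact hred.1 g (List.mem_cons_of_mem _ hg')
        · cases t with
          | nil => exact List.isChain_singleton _
          | cons h₂ t' =>
            refine List.isChain_cons_cons.mpr ⟨?_, (List.isChain_cons_cons.mp hred.2).2⟩
            have hdf : DiffFactors A B h h₂ := (List.isChain_cons_cons.mp hred.2).1
            refine DF_congr_left ?_ hyC hdf
            rcases hf with ⟨p, q⟩ | ⟨p, q⟩
            · exact Or.inl ⟨mul_mem p q, q⟩
            · exact Or.inr ⟨mul_mem p q, q⟩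
    · -- x is pure and in the factor opposite to h: prepend
      have hd : DiffFactors A B x h := ⟨fun c => hf (Or.inl c), fun c => hf (Or.inr c)⟩
      have hxp : ¬(x ∈ A ∧ x ∈ B) := by
        intro ⟨xA, xB⟩
        rcases hhp.1 with h' | h'
        · exact hf (Or.inl ⟨xA, h'⟩)
        · exact hf (Or.inr ⟨xB, h'⟩)
      refine Or.inr ⟨x :: h :: t, ⟨?_, List.isChain_cons_cons.mpr ⟨hd, hred.2⟩⟩, by simp, by simp⟩
      intro g hg
      rcases List.mem_cons.mp hg with rfl | hg'
      · exact ⟨hx, hxp⟩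
      · exact hred.1 g hg'

lemma prod_ne_one_of_cons (hAB : IsAmalgam A B) {l : List Γ} (hl : ReducedSeq A B l)
    (hlen : 2 ≤ l.length) {x : Γ} (hx : x ∈ A ∨ x ∈ B) : x * l.prod ≠ 1 := by
  intro h
  rcases prep hAB l hl x hx with ⟨_, hle⟩ | ⟨l', hl', hne, hp⟩
  · omega
  · exact hAB.2 l' hl' hne (hp.trans h)

lemma cancel (hAB : IsAmalgam A B) {u w : List Γ} (hu : ReducedSeq A B u)
    (hw : ReducedSeq A B w) {a b : Γ} (ha : u.getLast? = some a) (hb : w.head? = some b)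
    (h1 : u.prod * w.prod = 1) : a * b ∈ A ⊓ B := by
  obtain ⟨u₀, rfl⟩ := List.getLast?_eq_some_iff.mp ha
  obtain ⟨w₁, rfl⟩ : ∃ w₁, w = b :: w₁ := by
    cases w with
    | nil => simp at hb
    | cons c w₁ =>
      simp only [List.head?_cons, Option.some.injEq] at hb
      exact ⟨w₁, by rw [hb]⟩
  have hap := hu.1 a (by simp)
  have hbp := hw.1 b (by simp)
  by_cases hab : (a ∈ A ∧ b ∈ A) ∨ (a ∈ B ∧ b ∈ B)
  · by_cases hyC : a * b ∈ A ∧ a * b ∈ B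
    · exact Subgroup.mem_inf.mpr hyC
    · exfalso
      have hyF : a * b ∈ A ∨ a * b ∈ B := by
        rcases hab with ⟨p, q⟩ | ⟨p, q⟩
        · exact Or.inl (mul_mem p q)
        · exact Or.inr (mul_mem p q)
      have hu₀ := List.isChain_append.mp hu.2
      refine hAB.2 (u₀ ++ (a * b) :: w₁) ⟨?_, ?_⟩ (by simp) ?_
      · intro g hg
        rcases List.mem_append.mp hg with h' | h'
        · exact hu.1 g (List.mem_append_left _ h')
        · rcases List.mem_cons.mp h' with rfl | h''
          · exact ⟨hyF, hyC⟩
          · exact hw.1 g (List.mem_cons_of_mem _ h'')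
      · show List.IsChain _ _
        rw [List.isChain_append]
        refine ⟨hu₀.1, ?_, ?_⟩
        · cases w₁ with
          | nil => simp
          | cons c w' =>
            refine List.isChain_cons_cons.mpr ⟨?_, (List.isChain_cons_cons.mp hw.2).2⟩
            refine DF_congr_left ?_ hyC (List.isChain_cons_cons.mp hw.2).1
            rcases hab with ⟨p, q⟩ | ⟨p, q⟩
            · exact Or.inl ⟨mul_mem p q, q⟩
            · exact Or.inr ⟨mul_mem p q, q⟩
        · intro p hp q hq
          simp only [List.head?_cons, Option.mem_def, Option.some.injEq] at hq
          subst hq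
          have hpa : DiffFactors A B p a := by
            have := hu₀.2.2 p hp a (by simp)
            exact this
          refine DF_congr_right ?_ hyC hpa
          rcases hab with ⟨p', q'⟩ | ⟨p', q'⟩
          · exact Or.inl ⟨mul_mem p' q', p'⟩
          · exact Or.inr ⟨mul_mem p' q', p'⟩
      · have : (u₀ ++ (a * b) :: w₁).prod = (u₀ ++ [a]).prod * (b :: w₁).prod := by
          simp [List.prod_append, mul_assoc]
        rw [this, h1]
  · -- different factors: concatenation is reduced
    have hd : DiffFactors A B a b := ⟨fun c => hab (Or.inl c), fun c => hab (Or.inr c)⟩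
    exfalso
    refine hAB.2 ((u₀ ++ [a]) ++ b :: w₁) ⟨?_, ?_⟩ (by simp) ?_
    · intro g hg
      rcases List.mem_append.mp hg with h' | h'
      · exact hu.1 g h'
      · exact hw.1 g h'
    · show List.IsChain _ _
      rw [List.isChain_append]
      refine ⟨hu.2, hw.2, ?_⟩
      intro p hp q hq
      simp only [List.getLast?_concat, Option.mem_def, Option.some.injEq] at hp
      simp only [List.head?_cons, Option.mem_def, Option.some.injEq] at hq
      subst hp; subst hq
      exact hd
    · rw [List.prod_append, h1]

lemma exist_red_list (hAB : IsAmalgam A B) :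
    ∀ ll : List Γ, (∀ y ∈ ll, y ∈ A ∨ y ∈ B) →
      ll.prod ∈ A ⊓ B ∨ ∃ l, ReducedSeq A B l ∧ l.prod = ll.prod := by
  intro ll
  induction ll with
  | nil => intro _; exact Or.inl (by rw [List.prod_nil]; exact one_mem _)
  | cons x t ih =>
    intro hmem
    have hx := hmem x (by simp)
    rcases ih (fun y hy => hmem y (List.mem_cons_of_mem _ hy)) with hc | ⟨l, hl, hp⟩
    · have hc' := Subgroup.mem_inf.mp hc
      have hyF : x * t.prod ∈ A ∨ x * t.prod ∈ B := by
        rcases hx with h' | h'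
        · exact Or.inl (mul_mem h' hc'.1)
        · exact Or.inr (mul_mem h' hc'.2)
      by_cases hyC : x * t.prod ∈ A ∧ x * t.prod ∈ B
      · exact Or.inl (by simpa using Subgroup.mem_inf.mpr hyC)
      · refine Or.inr ⟨[x * t.prod], ⟨?_, List.isChain_singleton _⟩, by simp⟩
        intro g hg
        rw [List.mem_singleton] at hg
        subst hg
        exact ⟨hyF, hyC⟩
    · rcases prep hAB l hl x hx with ⟨hc, _⟩ | ⟨l', hl', _, hp'⟩
      · exact Or.inl (by rw [List.prod_cons, ← hp]; exact hc)
      · exact Or.inr ⟨l', hl', by rw [hp', hp, List.prod_cons]⟩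

lemma amalgam_main (hAB : IsAmalgam A B) (γ : Γ) (hcyc : AmCyclicallyReduced A B γ)
    (hnC : ∀ g : Γ, ∀ c ∈ A ⊓ B, γ ≠ g * c * g⁻¹) :
    ∀ m : List Γ, ReducedSeq A B m → ∀ γ', (γ' ∈ A ∨ γ' ∈ B) →
      γ = m.prod * γ' * m.prod⁻¹ →
      (γ ∈ A ∧ γ' ∈ A ∧ ∃ a ∈ A, γ = a * γ' * a⁻¹) ∨
      (γ ∈ B ∧ γ' ∈ B ∧ ∃ b ∈ B, γ = b * γ' * b⁻¹) := by
  intro m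
  induction m using List.reverseRecOn with
  | nil =>
    intro _ γ' hγ' heq
    simp only [List.prod_nil, one_mul, inv_one, mul_one] at heq
    rcases hγ' with h | h
    · exact Or.inl ⟨by rw [heq]; exact h, h, 1, one_mem _, by simp [heq]⟩
    · exact Or.inr ⟨by rw [heq]; exact h, h, 1, one_mem _, by simp [heq]⟩
  | append_singleton t x ih =>
    intro hred γ' hγ' heq
    have hredt : ReducedSeq A B t :=
      ⟨fun g hg => hred.1 g (List.mem_append_left _ hg), (List.isChain_append.mp hred.2).1⟩
    have hxp := hred.1 x (by simp)
    have hprod : (t ++ [x]).prod = t.prod * x := by simp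
    by_cases hf : (x ∈ A ∧ γ' ∈ A) ∨ (x ∈ B ∧ γ' ∈ B)
    · -- x and γ' in a common factor
      have hδF : x * γ' * x⁻¹ ∈ A ∨ x * γ' * x⁻¹ ∈ B := by
        rcases hf with ⟨p, q⟩ | ⟨p, q⟩
        · exact Or.inl (mul_mem (mul_mem p q) (inv_mem p))
        · exact Or.inr (mul_mem (mul_mem p q) (inv_mem p))
      have heq' : γ = t.prod * (x * γ' * x⁻¹) * t.prod⁻¹ := by
        rw [heq, hprod]; group
      rcases ih hredt (x * γ' * x⁻¹) hδF heq' with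
        ⟨hγA, hδA, a, haA, hae⟩ | ⟨hγB, hδB, b, hbB, hbe⟩
      · rcases hf with ⟨hxA, hγ'A⟩ | ⟨hxB, hγ'B⟩
        · exact Or.inl ⟨hγA, hγ'A, a * x, mul_mem haA hxA, by rw [hae]; group⟩
        · exact absurd hae (hnC a (x * γ' * x⁻¹)
            (Subgroup.mem_inf.mpr ⟨hδA, mul_mem (mul_mem hxB hγ'B) (inv_mem hxB)⟩))
      · rcases hf with ⟨hxA, hγ'A⟩ | ⟨hxB, hγ'B⟩
        · exact absurd hbe (hnC b (x * γ' * x⁻¹)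
            (Subgroup.mem_inf.mpr ⟨mul_mem (mul_mem hxA hγ'A) (inv_mem hxA), hδB⟩))
        · exact Or.inr ⟨hγB, hγ'B, b * x, mul_mem hbB hxB, by rw [hbe]; group⟩
    · -- x and γ' pure in different factors: contradiction
      exfalso
      have hd : DiffFactors A B x γ' := ⟨fun c => hf (Or.inl c), fun c => hf (Or.inr c)⟩
      have hγ'p : ¬(γ' ∈ A ∧ γ' ∈ B) := by
        intro ⟨p, q⟩
        rcases hxp.1 with h' | h'
        · exact hf (Or.inl ⟨h', p⟩)
        · exact hf (Or.inr ⟨h', q⟩)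
      have hmne : (t ++ [x]) ≠ [] := by simp
      have hRred : ReducedSeq A B (((t ++ [x]).map (fun z => z⁻¹)).reverse) :=
        reducedSeq_revinv hred
      have hRprod : (((t ++ [x]).map (fun z => z⁻¹)).reverse).prod = (t ++ [x]).prod⁻¹ :=
        (List.prod_inv_reverse _).symm
      set m : List Γ := t ++ [x] with hm
      set R : List Γ := (m.map (fun z => z⁻¹)).reverse with hR
      set w : List Γ := m ++ γ' :: R with hwdef
      have hRhead : R.head? = some x⁻¹ := by
        rw [hR, List.head?_reverse, List.getLast?_map, hm, List.getLast?_concat]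
        rfl
      have hRne : R ≠ [] := by
        intro h'
        rw [h'] at hRhead
        simp at hRhead
      have hwred : ReducedSeq A B w := by
        constructor
        · intro g hg
          rcases List.mem_append.mp hg with h' | h'
          · exact hred.1 g h'
          · rcases List.mem_cons.mp h' with rfl | h''
            · exact ⟨hγ', hγ'p⟩
            · exact hRred.1 g h''
        · show List.IsChain _ _
          rw [hwdef, List.isChain_append]
          refine ⟨hred.2, ?_, ?_⟩
          · cases hR' : R with
            | nil => simp
            | cons r R' =>
              rw [hR'] at hRhead
              simp only [List.head?_cons, Option.some.injEq] at hRhead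
              subst hRhead
              exact List.isChain_cons_cons.mpr ⟨DF_inv_right (DF_symm hd), hR' ▸ hRred.2⟩
          · intro p hp q hq
            rw [hm, List.getLast?_concat] at hp
            simp only [Option.mem_def, Option.some.injEq] at hp
            simp only [List.head?_cons, Option.mem_def, Option.some.injEq] at hq
            subst hp; subst hq
            exact hd
      have hwprod : w.prod = γ := by
        rw [hwdef, List.prod_append, List.prod_cons, hRprod, heq, hm]
        group
      have hml : 0 < m.length := List.length_pos_iff.mpr hmne
      have hwlen : 2 ≤ w.length := by
        rw [hwdef]
        simp only [List.length_append, List.length_cons]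
        omega
      obtain ⟨d, hd0⟩ : ∃ d, m.head? = some d := ⟨m.head hmne, List.head?_eq_head hmne⟩
      have hwhead : w.head? = some d := by
        rw [hwdef, List.head?_append_of_ne_nil _ hmne]; exact hd0
      have hRlast : R.getLast? = some d⁻¹ := by
        rw [hR, List.getLast?_reverse, List.head?_map, hd0]
        rfl
      have hwlast : w.getLast? = some d⁻¹ := by
        rw [show w = (m ++ [γ']) ++ R by rw [hwdef]; simp, List.getLast?_append, hRlast]
        rfl
      have hdp := hred.1 d (List.mem_of_mem_head? (by rw [hd0]; rfl))
      rcases hcyc with hγF | ⟨l, hl, hlp, hllen, xh, yh, hxh, hyh, hdf⟩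
      · -- γ lies in a factor: contradiction with the long reduced word w
        have : γ⁻¹ * w.prod = 1 := by rw [hwprod]; simp
        exact prod_ne_one_of_cons hAB hwred hwlen
          (hγF.imp (fun h' => inv_mem h') (fun h' => inv_mem h')) this
      · -- γ has a long cyclically reduced form: use cancellation at both ends
        have hured : ReducedSeq A B ((l.map (fun z => z⁻¹)).reverse) := reducedSeq_revinv hl
        have huprod : ((l.map (fun z => z⁻¹)).reverse).prod = γ⁻¹ := by
          rw [← List.prod_inv_reverse, hlp]
        have hulast : ((l.map (fun z => z⁻¹)).reverse).getLast? = some xh⁻¹ := by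
          rw [List.getLast?_reverse, List.head?_map, hxh]
          rfl
        have huhead : ((l.map (fun z => z⁻¹)).reverse).head? = some yh⁻¹ := by
          rw [List.head?_reverse, List.getLast?_map, hyh]
          rfl
        have h1 := cancel hAB hured hwred hulast hwhead
          (by rw [huprod, hwprod]; simp)
        have h2 := cancel hAB hwred hured hwlast huhead
          (by rw [huprod, hwprod]; simp)
        have h1' := Subgroup.mem_inf.mp h1
        have h2' := Subgroup.mem_inf.mp h2
        rcases hdp.1 with dA | dB
        · have hxhA : xh ∈ A := by
            have : xh⁻¹ ∈ A := by simpa using mul_mem h1'.1 (inv_mem dA)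
            simpa using this
          have hyhA : yh ∈ A := by
            have : yh⁻¹ ∈ A := by simpa using mul_mem dA h2'.1
            simpa using this
          exact hdf.1 ⟨hxhA, hyhA⟩
        · have hxhB : xh ∈ B := by
            have : xh⁻¹ ∈ B := by simpa using mul_mem h1'.2 (inv_mem dB)
            simpa using this
          have hyhB : yh ∈ B := by
            have : yh⁻¹ ∈ B := by simpa using mul_mem dB h2'.2
            simpa using this
          exact hdf.2 ⟨hxhB, hyhB⟩


lemma exist_red (hAB : IsAmalgam A B) (g : Γ) :
    g ∈ A ⊓ B ∨ ∃ l, ReducedSeq A B l ∧ l.prod = g := by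
  have hg : g ∈ Subgroup.closure ((↑A ∪ ↑B : Set Γ)) := by
    rw [Subgroup.closure_union, Subgroup.closure_eq, Subgroup.closure_eq, hAB.1]
    trivial
  have hg' : g ∈ Submonoid.closure ((↑A ∪ ↑B : Set Γ) ∪ ((↑A ∪ ↑B : Set Γ))⁻¹) := by
    rw [← Subgroup.closure_toSubmonoid]
    exact hg
  obtain ⟨ll, hll, hprod⟩ := Submonoid.exists_list_of_mem_closure hg'
  have hmem : ∀ y ∈ ll, y ∈ A ∨ y ∈ B := by
    intro y hy
    rcases hll y hy with h | h
    · rcases h with h | h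
      · exact Or.inl h
      · exact Or.inr h
    · rw [Set.mem_inv] at h
      rcases h with h | h
      · exact Or.inl (by simpa using inv_mem (show y⁻¹ ∈ A from h))
      · exact Or.inr (by simpa using inv_mem (show y⁻¹ ∈ B from h))
  rw [← hprod]
  exact exist_red_list hAB ll hmem

end AmalgamAux

/-- Conjugation theorem in an amalgam, case (ii): if the cyclically reduced
element `γ` is conjugate to an element `γ'` of a factor, but is not conjugate
to any element of `C = A ⊓ B`, then `γ` and `γ'` lie in the same factor and are
conjugate by an element of that factor. -/
theorem amalgam_conj_in_factor (A B : Subgroup Γ) (hAB : IsAmalgam A B)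
    (γ γ' : Γ) (hcyc : AmCyclicallyReduced A B γ)
    (hfac : γ' ∈ A ∨ γ' ∈ B)
    (hconj : ∃ g : Γ, γ = g * γ' * g⁻¹)
    (hnC : ∀ g : Γ, ∀ c ∈ A ⊓ B, γ ≠ g * c * g⁻¹) :
    (γ ∈ A ∧ γ' ∈ A ∧ ∃ a ∈ A, γ = a * γ' * a⁻¹) ∨
    (γ ∈ B ∧ γ' ∈ B ∧ ∃ b ∈ B, γ = b * γ' * b⁻¹) := by
  obtain ⟨g, hg⟩ := hconj
  rcases exist_red hAB g with hC | ⟨m, hm, hp⟩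
  · have hC' := Subgroup.mem_inf.mp hC
    rcases hfac with h | h
    · exact Or.inl ⟨by rw [hg]; exact mul_mem (mul_mem hC'.1 h) (inv_mem hC'.1),
        h, g, hC'.1, hg⟩
    · exact Or.inr ⟨by rw [hg]; exact mul_mem (mul_mem hC'.2 h) (inv_mem hC'.2),
        h, g, hC'.2, hg⟩
  · exact amalgam_main hAB γ hcyc hnC m hm γ' hfac (by rw [hp]; exact hg)
end

section
/- Let Γ = A *_C B and let γ ∈ Γ be cyclically reduced. If γ is conjugate in Γ to a cyclically reduced element with reduced form p_1 p_2 ⋯ p_r where r > 1, then γ can be obtained by conjugating some cyclic conjugate p_i ⋯ p_r p_1 ⋯ p_{i-1} of p_1 p_2 ⋯ p_r by an element of C. -/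
/-!
Internal characterization of the amalgamated free product `Γ = A *_C B`:
`A` and `B` are subgroups of `Γ` generating `Γ`, the amalgamated subgroup is
`C = A ⊓ B`, and (normal form theorem) the product of any nonempty reduced
sequence is nontrivial.
-/

variable {Γ : Type*} [Group Γ]

namespace AmalgamAux
variable {A B : Subgroup Γ}
def OneFac (A B : Subgroup Γ) (x : Γ) : Prop := (x ∈ A ∨ x ∈ B) ∧ ¬(x ∈ A ∧ x ∈ B)
def SameFac (A B : Subgroup Γ) (x y : Γ) : Prop := (x ∈ A ∧ y ∈ A) ∨ (x ∈ B ∧ y ∈ B)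
theorem diffFactors_symm {x y : Γ} (h : DiffFactors A B x y) : DiffFactors A B y x :=
  ⟨fun hc => h.1 ⟨hc.2, hc.1⟩, fun hc => h.2 ⟨hc.2, hc.1⟩⟩
theorem diffFactors_comm {x y : Γ} (h : DiffFactors A B x y) : DiffFactors B A x y :=
  ⟨h.2, h.1⟩
theorem oneFac_comm {x : Γ} (h : OneFac A B x) : OneFac B A x :=
  ⟨h.1.symm, fun hc => h.2 ⟨hc.2, hc.1⟩⟩
theorem sameFac_comm {x y : Γ} (h : SameFac A B x y) : SameFac B A x y := h.symm
theorem oneFac_inv {x : Γ} (h : OneFac A B x) : OneFac A B x⁻¹ := by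
  unfold OneFac at *; simpa using h
theorem diffFactors_inv_right {x y : Γ} (h : DiffFactors A B x y) :
    DiffFactors A B x y⁻¹ := by
  unfold DiffFactors at *; simpa using h
theorem reducedSeq_comm {l : List Γ} (h : ReducedSeq A B l) : ReducedSeq B A l := by
  refine ⟨fun g hg => oneFac_comm (h.1 g hg), ?_⟩
  exact List.IsChain.imp (fun a b hab => diffFactors_comm hab) h.2
theorem isAmalgam_comm (h : IsAmalgam A B) : IsAmalgam B A := by
  refine ⟨by rw [sup_comm]; exact h.1, fun l hl => h.2 l (reducedSeq_comm hl)⟩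
theorem reducedSeq_append {l m : List Γ} :
    ReducedSeq A B (l ++ m) ↔
      ReducedSeq A B l ∧ ReducedSeq A B m ∧
        (∀ x ∈ l.getLast?, ∀ y ∈ m.head?, DiffFactors A B x y) := by
  constructor
  · rintro ⟨hmem, hch⟩
    unfold List.Chain' at hch; rw [List.isChain_append] at hch
    exact ⟨⟨fun g hg => hmem g (by simp [hg]), hch.1⟩,
      ⟨fun g hg => hmem g (by simp [hg]), hch.2.1⟩, hch.2.2⟩
  · rintro ⟨⟨m1, c1⟩, ⟨m2, c2⟩, hj⟩
    refine ⟨fun g hg => ?_, List.isChain_append.2 ⟨c1, c2, hj⟩⟩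
    rcases List.mem_append.1 hg with h | h
    exacts [m1 g h, m2 g h]
def invRev (l : List Γ) : List Γ := (l.map fun x => x⁻¹).reverse
@[simp] theorem invRev_length (l : List Γ) : (invRev l).length = l.length := by
  simp [invRev]
@[simp] theorem invRev_prod (l : List Γ) : (invRev l).prod = l.prod⁻¹ := by
  induction l with
  | nil => simp [invRev]
  | cons a t ih => simp [invRev, List.prod_append] at *; simp [ih]
@[simp] theorem invRev_head? (l : List Γ) : (invRev l).head? = l.getLast?.map (·⁻¹) := by
  simp [invRev, List.head?_reverse, List.getLast?_map]
@[simp] theorem invRev_getLast? (l : List Γ) : (invRev l).getLast? = l.head?.map (·⁻¹) := by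
  simp [invRev, List.getLast?_reverse, List.head?_map]
@[simp] theorem invRev_nil_iff {l : List Γ} : invRev l = [] ↔ l = [] := by
  simp [invRev]
theorem invRev_reducedSeq {l : List Γ} (h : ReducedSeq A B l) : ReducedSeq A B (invRev l) := by
  refine ⟨fun g hg => ?_, ?_⟩
  · simp only [invRev, List.mem_reverse, List.mem_map] at hg
    rcases hg with ⟨a, ha, rfl⟩
    exact oneFac_inv (h.1 a ha)
  · rw [invRev]; unfold List.Chain'; rw [List.isChain_reverse, List.isChain_map]
    refine List.IsChain.imp (fun a b hab => ?_) h.2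
    show DiffFactors A B b⁻¹ a⁻¹
    have := diffFactors_symm hab
    unfold DiffFactors at *; simpa using this

-- PART 2
theorem mem_inf_iff {c : Γ} : c ∈ A ⊓ B ↔ c ∈ A ∧ c ∈ B := Subgroup.mem_inf

theorem diff_or_same {x y : Γ} (hx : OneFac A B x) (hy : OneFac A B y) :
    DiffFactors A B x y ∨
      (x ∈ A ∧ x ∉ B ∧ y ∈ A ∧ y ∉ B) ∨ (x ∈ B ∧ x ∉ A ∧ y ∈ B ∧ y ∉ A) := by
  unfold OneFac DiffFactors at *; tauto

theorem opp_of_diff {u y : Γ} (hu : OneFac A B u) (h : DiffFactors A B u y)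
    (hyA : y ∈ A) : u ∈ B ∧ u ∉ A := by
  unfold OneFac DiffFactors at *; tauto

theorem absorb_right {l₀ : List Γ} {x c : Γ} (hl : ReducedSeq A B (l₀ ++ [x]))
    (hc : c ∈ A ⊓ B) : ReducedSeq A B (l₀ ++ [x * c]) := by
  rw [mem_inf_iff] at hc
  rw [reducedSeq_append] at hl ⊢
  obtain ⟨h1, h2, h3⟩ := hl
  have hx := h2.1 x (by simp)
  have hmA : x * c ∈ A ↔ x ∈ A := mul_mem_cancel_right hc.1
  have hmB : x * c ∈ B ↔ x ∈ B := mul_mem_cancel_right hc.2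
  refine ⟨h1, ⟨fun g hg => ?_, List.IsChain.singleton _⟩, fun u hu v hv => ?_⟩
  · simp only [List.mem_singleton] at hg; subst hg
    unfold OneFac at *; rw [hmA, hmB]; exact hx
  · simp only [List.head?_cons, Option.mem_def, Option.some.injEq] at hv
    subst hv
    have := h3 u hu x (by simp)
    unfold DiffFactors at *; rw [hmA, hmB]; exact this

theorem red_singleton {x : Γ} (hx : OneFac A B x) : ReducedSeq A B [x] :=
  ⟨fun g hg => by simp only [List.mem_singleton] at hg; subst hg; exact hx, List.IsChain.singleton _⟩

theorem mem_of_getLast?' {l : List Γ} {x : Γ} (h : x ∈ l.getLast?) : x ∈ l := by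
  rcases List.mem_getLast?_eq_getLast h with ⟨h1, rfl⟩
  exact List.getLast_mem h1

/-- core cancellation: two reduced words with equal products whose last letters
both lie in `A` only must have those letters agreeing mod `C`. -/
theorem last_quot_mem (A B : Subgroup Γ) (hAB : IsAmalgam A B) (l' m' : List Γ) (x y : Γ)
    (hl : ReducedSeq A B (l' ++ [x])) (hm : ReducedSeq A B (m' ++ [y]))
    (hprod : (l' ++ [x]).prod = (m' ++ [y]).prod)
    (hxA : x ∈ A) (hxB : x ∉ B) (hyA : y ∈ A) (hyB : y ∉ B) :
    x * y⁻¹ ∈ A ⊓ B := by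
  by_contra hC
  set z := x * y⁻¹ with hzdef
  have hzA : z ∈ A := mul_mem hxA (inv_mem hyA)
  have hzB : z ∉ B := fun h => hC (mem_inf_iff.2 ⟨hzA, h⟩)
  obtain ⟨hl', hlx, hjl⟩ := reducedSeq_append.1 hl
  obtain ⟨hm', hmy, hjm⟩ := reducedSeq_append.1 hm
  have hred : ReducedSeq A B (l' ++ [z] ++ invRev m') := by
    rw [reducedSeq_append, reducedSeq_append]
    refine ⟨⟨hl', red_singleton ⟨Or.inl hzA, fun h => hzB h.2⟩, ?_⟩,
      invRev_reducedSeq hm', ?_⟩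
    · intro u hu v hv
      simp only [List.head?_cons, Option.mem_def, Option.some.injEq] at hv
      subst hv
      have hdu := hjl u hu x (by simp)
      have := opp_of_diff (hl'.1 u (mem_of_getLast?' hu)) hdu hxA
      exact ⟨fun hc => this.2 hc.1, fun hc => hzB hc.2⟩
    · intro u hu v hv
      simp only [List.getLast?_concat, Option.mem_def, Option.some.injEq] at hu
      subst hu
      simp only [invRev_head?, Option.mem_def, Option.map_eq_some_iff] at hv
      obtain ⟨w, hw, rfl⟩ := hv
      have hdw := hjm w hw y (by simp)
      have h2 := opp_of_diff (hm'.1 w (mem_of_getLast?' hw)) hdw hyA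
      constructor
      · rintro ⟨_, hwA⟩; exact h2.2 (by simpa using hwA)
      · rintro ⟨hzb, _⟩; exact hzB hzb
  have h1 : l'.prod * x = m'.prod * y := by
    simpa [List.prod_append] using hprod
  have hone : (l' ++ [z] ++ invRev m').prod = 1 := by
    simp only [List.prod_append, List.prod_cons, List.prod_nil, invRev_prod, mul_one, hzdef]
    rw [← mul_assoc, h1]
    group
  exact hAB.2 _ hred (by simp) hone

theorem prod_unique (hAB : IsAmalgam A B) :
    ∀ (n : ℕ) (l m : List Γ), l.length ≤ n → ReducedSeq A B l → ReducedSeq A B m →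
      l.prod = m.prod →
      l.length = m.length ∧
        ∀ x y, l.getLast? = some x → m.getLast? = some y → SameFac A B x y := by
  intro n
  induction n with
  | zero =>
    intro l m hlen hl hm hp
    have hl0 : l = [] := List.length_eq_zero_iff.1 (Nat.le_zero.1 hlen)
    subst hl0
    have hm0 : m = [] := by
      by_contra hne
      exact hAB.2 m hm hne (by simpa using hp.symm)
    subst hm0
    simp
  | succ n ih =>
    intro l m hlen hl hm hp
    rcases l.eq_nil_or_concat' with rfl | ⟨l', x, rfl⟩
    · have hm0 : m = [] := by
        by_contra hne
        exact hAB.2 m hm hne (by simpa using hp.symm)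
      subst hm0; simp
    rcases m.eq_nil_or_concat' with rfl | ⟨m', y, rfl⟩
    · exact absurd (by simpa using hp) (hAB.2 _ hl (by simp))
    obtain ⟨hl', hlx, hjl⟩ := reducedSeq_append.1 hl
    obtain ⟨hm', hmy, hjm⟩ := reducedSeq_append.1 hm
    have hxf : OneFac A B x := hl.1 x (by simp)
    have hyf : OneFac A B y := hm.1 y (by simp)
    -- x and y cannot lie in different factors
    have hnd : ¬ DiffFactors A B x y := by
      intro hd
      have hred : ReducedSeq A B ((l' ++ [x]) ++ invRev (m' ++ [y])) := by
        rw [reducedSeq_append]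
        refine ⟨hl, invRev_reducedSeq hm, ?_⟩
        intro u hu v hv
        simp only [List.getLast?_concat, Option.mem_def, Option.some.injEq] at hu
        subst hu
        simp only [invRev_head?, List.getLast?_concat, Option.mem_def, Option.map_some,
          Option.some.injEq] at hv
        subst hv
        exact diffFactors_inv_right hd
      have hone : ((l' ++ [x]) ++ invRev (m' ++ [y])).prod = 1 := by
        have heq : ((l' ++ [x]) ++ invRev (m' ++ [y])).prod
            = (l' ++ [x]).prod * ((m' ++ [y]).prod)⁻¹ := by
          rw [List.prod_append, invRev_prod]
        rw [heq, hp]; group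
      exact hAB.2 _ hred (by simp) hone
    have hsame := (diff_or_same hxf hyf).resolve_left hnd
    -- in either case x*y⁻¹ ∈ C and SameFac x y
    have hC : x * y⁻¹ ∈ A ⊓ B ∧ SameFac A B x y := by
      rcases hsame with ⟨h1, h2, h3, h4⟩ | ⟨h1, h2, h3, h4⟩
      · exact ⟨last_quot_mem A B hAB l' m' x y hl hm hp h1 h2 h3 h4,
          Or.inl ⟨h1, h3⟩⟩
      · have := last_quot_mem B A (isAmalgam_comm hAB) l' m' x y
          (reducedSeq_comm hl) (reducedSeq_comm hm) hp h1 h2 h3 h4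
        rw [Subgroup.mem_inf] at this
        exact ⟨mem_inf_iff.2 ⟨this.2, this.1⟩, Or.inr ⟨h1, h3⟩⟩
    obtain ⟨hcmem, hsf⟩ := hC
    have hprods : l'.prod * (x * y⁻¹) = m'.prod := by
      have h1 : l'.prod * x = m'.prod * y := by simpa [List.prod_append] using hp
      rw [← mul_assoc, h1]; group
    have hlens : l'.length = m'.length := by
      rcases l'.eq_nil_or_concat' with rfl | ⟨l'', x', rfl⟩
      · -- l' = [], so m'.prod = x*y⁻¹ ∈ C, forcing m' = []
        rcases m'.eq_nil_or_concat' with rfl | ⟨m'', y', rfl⟩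
        · simp
        · exfalso
          have habs := absorb_right (c := (x * y⁻¹)⁻¹) hm' (inv_mem hcmem)
          refine hAB.2 _ habs (by simp) ?_
          simp only [List.prod_append, List.prod_cons, List.prod_nil, mul_one]
          have : (m'' ++ [y']).prod = x * y⁻¹ := by simpa using hprods.symm
          simp only [List.prod_append, List.prod_cons, List.prod_nil, mul_one] at this
          rw [← mul_assoc, this]; group
      · have habs := absorb_right (c := x * y⁻¹) hl' hcmem
        have hlen2 : (l'' ++ [x' * (x * y⁻¹)]).length ≤ n := by
          simp at hlen ⊢; omega
        have := (ih _ m' hlen2 habs hm' (by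
          simp only [List.prod_append, List.prod_cons, List.prod_nil, mul_one] at hprods ⊢
          rw [← hprods]; group)).1
        simpa using this
    constructor
    · simp [hlens]
    · intro x0 y0 hx0 hy0
      simp only [List.getLast?_concat, Option.some.injEq] at hx0 hy0
      subst hx0; subst hy0
      exact hsf

theorem prod_unique_head (hAB : IsAmalgam A B) (l m : List Γ)
    (hl : ReducedSeq A B l) (hm : ReducedSeq A B m) (hp : l.prod = m.prod) :
    ∀ x y, l.head? = some x → m.head? = some y → SameFac A B x y := by
  intro x y hx hy
  have := (prod_unique hAB (invRev l).length (invRev l) (invRev m) le_rfl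
    (invRev_reducedSeq hl) (invRev_reducedSeq hm) (by simp [hp])).2 x⁻¹ y⁻¹
    (by simp [hx]) (by simp [hy])
  unfold SameFac at *
  simpa using this

-- PART 3

theorem mem_of_head?' {l : List Γ} {x : Γ} (h : l.head? = some x) : x ∈ l := by
  cases l with
  | nil => simp at h
  | cons a t =>
    simp only [List.head?_cons, Option.some.injEq] at h
    subst h; exact List.mem_cons_self

theorem diffFactors_inv_both {x y : Γ} (h : DiffFactors A B x y) :
    DiffFactors A B x⁻¹ y⁻¹ := by
  unfold DiffFactors at *; simpa using h

theorem invRev_append (l m : List Γ) : invRev (l ++ m) = invRev m ++ invRev l := by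
  simp [invRev]

theorem amCyc_inv {g : Γ} (h : AmCyclicallyReduced A B g) :
    AmCyclicallyReduced A B g⁻¹ := by
  rcases h with h | ⟨l, hl, hp, h2, x, y, hx, hy, hxy⟩
  · rcases h with h | h
    exacts [Or.inl (Or.inl (inv_mem h)), Or.inl (Or.inr (inv_mem h))]
  · refine Or.inr ⟨invRev l, invRev_reducedSeq hl, by simp [hp], by simpa using h2,
      y⁻¹, x⁻¹, by simp [hy], by simp [hx], diffFactors_inv_both (diffFactors_symm hxy)⟩

theorem amCyc_comm {g : Γ} (h : AmCyclicallyReduced A B g) :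
    AmCyclicallyReduced B A g := by
  rcases h with h | ⟨l, hl, hp, h2, x, y, hx, hy, hxy⟩
  · exact Or.inl h.symm
  · exact Or.inr ⟨l, reducedSeq_comm hl, hp, h2, x, y, hx, hy, diffFactors_comm hxy⟩

def HasForm (A B : Subgroup Γ) (g : Γ) : Prop :=
  g ∈ A ⊓ B ∨ ∃ l, ReducedSeq A B l ∧ l ≠ [] ∧ l.prod = g

theorem hasForm_comm {g : Γ} (h : HasForm A B g) : HasForm B A g := by
  rcases h with h | ⟨l, h1, h2, h3⟩
  · rw [Subgroup.mem_inf] at h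
    exact Or.inl (Subgroup.mem_inf.2 h.symm)
  · exact Or.inr ⟨l, reducedSeq_comm h1, h2, h3⟩

theorem syll_core (A B : Subgroup Γ) {l₀ : List Γ} {y x : Γ}
    (hl : ReducedSeq A B (l₀ ++ [y]))
    (hyA : y ∈ A) (hyB : y ∉ B) (hxA : x ∈ A) (hxB : x ∉ B) :
    HasForm A B ((l₀ ++ [y]).prod * x) := by
  obtain ⟨hl₀, hly, hj⟩ := reducedSeq_append.1 hl
  by_cases hz : y * x ∈ A ⊓ B
  · rcases l₀.eq_nil_or_concat' with rfl | ⟨l₁, y', rfl⟩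
    · left
      simpa [mul_assoc] using hz
    · right
      refine ⟨l₁ ++ [y' * (y * x)], absorb_right hl₀ hz, by simp, ?_⟩
      simp [List.prod_append, mul_assoc]
  · right
    refine ⟨l₀ ++ [y * x], ?_, by simp, by simp [List.prod_append, mul_assoc]⟩
    rw [reducedSeq_append]
    have hzA : y * x ∈ A := mul_mem hyA hxA
    have hzB : y * x ∉ B := fun h => hz (mem_inf_iff.2 ⟨hzA, h⟩)
    refine ⟨hl₀, red_singleton ⟨Or.inl hzA, fun h => hzB h.2⟩, ?_⟩
    intro u hu v hv
    simp only [List.head?_cons, Option.mem_def, Option.some.injEq] at hv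
    subst hv
    have hdu := hj u hu y (by simp)
    have h2 := opp_of_diff (hl₀.1 u (mem_of_getLast?' hu)) hdu hyA
    exact ⟨fun hc => h2.2 hc.1, fun hc => hzB hc.2⟩

theorem mul_syllable {g x : Γ} (hg : HasForm A B g) (hx : OneFac A B x) :
    HasForm A B (g * x) := by
  rcases hg with hg | ⟨l, hl, hne, rfl⟩
  · rw [mem_inf_iff] at hg
    right
    refine ⟨[g * x], red_singleton ⟨?_, ?_⟩, by simp, by simp⟩
    · rcases hx.1 with h | h
      exacts [Or.inl (mul_mem hg.1 h), Or.inr (mul_mem hg.2 h)]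
    · intro hc
      exact hx.2 ⟨(mul_mem_cancel_left hg.1).1 hc.1, (mul_mem_cancel_left hg.2).1 hc.2⟩
  · rcases l.eq_nil_or_concat' with rfl | ⟨l₀, y, rfl⟩
    · exact absurd rfl hne
    have hyf : OneFac A B y := hl.1 y (by simp)
    rcases diff_or_same hyf hx with hd | ⟨h1, h2, h3, h4⟩ | ⟨h1, h2, h3, h4⟩
    · right
      refine ⟨(l₀ ++ [y]) ++ [x], ?_, by simp, by simp [List.prod_append, mul_assoc]⟩
      rw [reducedSeq_append]
      refine ⟨hl, red_singleton hx, ?_⟩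
      intro u hu v hv
      rw [List.getLast?_concat] at hu
      simp only [Option.mem_def, Option.some.injEq, List.head?_cons] at hu hv
      subst hu; subst hv
      exact hd
    · exact syll_core A B hl h1 h2 h3 h4
    · exact hasForm_comm (syll_core B A (reducedSeq_comm hl) h1 h2 h3 h4)

theorem mul_list {g : Γ} (hg : HasForm A B g) :
    ∀ lh : List Γ, (∀ x ∈ lh, OneFac A B x) → HasForm A B (g * lh.prod) := by
  intro lh
  induction lh generalizing g with
  | nil => intro _; simpa using hg
  | cons x t ih =>
    intro hmem
    have := ih (mul_syllable hg (hmem x (by simp))) (fun z hz => hmem z (by simp [hz]))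
    simpa [mul_assoc] using this

theorem hasForm_mul {g h : Γ} (hg : HasForm A B g) (hh : HasForm A B h) :
    HasForm A B (g * h) := by
  rcases hh with hh | ⟨m, hm, hmne, rfl⟩
  · rcases hg with hg | ⟨l, hl, hlne, rfl⟩
    · exact Or.inl (mul_mem hg hh)
    · rcases l.eq_nil_or_concat' with rfl | ⟨l₀, y, rfl⟩
      · exact absurd rfl hlne
      · exact Or.inr ⟨l₀ ++ [y * h], absorb_right hl hh, by simp,
          by simp [List.prod_append, mul_assoc]⟩
  · exact mul_list hg m hm.1

theorem hasForm_inv {g : Γ} (hg : HasForm A B g) : HasForm A B g⁻¹ := by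
  rcases hg with hg | ⟨l, hl, hne, rfl⟩
  · exact Or.inl (inv_mem hg)
  · exact Or.inr ⟨invRev l, invRev_reducedSeq hl, by simpa using hne, by simp⟩

theorem hasForm_all (hAB : IsAmalgam A B) (g : Γ) : HasForm A B g := by
  have hg : g ∈ Subgroup.closure ((A : Set Γ) ∪ (B : Set Γ)) := by
    rw [Subgroup.closure_union, Subgroup.closure_eq, Subgroup.closure_eq, hAB.1]
    exact Subgroup.mem_top g
  refine Subgroup.closure_induction (p := fun x _ => HasForm A B x) ?_
    (Or.inl (one_mem _)) (fun x y _ _ hx hy => hasForm_mul hx hy)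
    (fun x _ hx => hasForm_inv hx) hg
  intro x hx
  by_cases hC : x ∈ A ⊓ B
  · exact Or.inl hC
  · right
    refine ⟨[x], red_singleton ⟨?_, fun h => hC (mem_inf_iff.2 h)⟩, by simp, by simp⟩
    rcases hx with h | h
    exacts [Or.inl h, Or.inr h]

theorem gamma_not_long (hAB : IsAmalgam A B) {γ : Γ} (hcyc : AmCyclicallyReduced A B γ)
    (w : List Γ) (hw : ReducedSeq A B w) (hwp : w.prod = γ) (hwlen : 3 ≤ w.length)
    (hd lt : Γ) (hhd : w.head? = some hd) (hlt : w.getLast? = some lt)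
    (hsf : SameFac A B hd lt) : False := by
  by_cases hγC : γ ∈ A ⊓ B
  · rcases w.eq_nil_or_concat' with rfl | ⟨w₀, wl, rfl⟩
    · simp at hwlen
    · have habs := absorb_right hw (inv_mem hγC)
      refine hAB.2 _ habs (by simp) ?_
      simp only [List.prod_append, List.prod_cons, List.prod_nil, mul_one] at hwp ⊢
      rw [← mul_assoc, hwp]
      group
  · rcases hcyc with hγ1 | ⟨lγ, hlγ, hlγp, hlγlen, x, y, hx, hy, hxy⟩
    · have hred : ReducedSeq A B [γ] :=
        red_singleton ⟨hγ1, fun h => hγC (mem_inf_iff.2 h)⟩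
      have := (prod_unique hAB w.length w [γ] le_rfl hw hred (by simp [hwp])).1
      simp only [List.length_singleton] at this
      omega
    · have hlast := (prod_unique hAB w.length w lγ le_rfl hw hlγ
        (hwp.trans hlγp.symm)).2 lt y hlt hy
      have hhead := prod_unique_head hAB w lγ hw hlγ (hwp.trans hlγp.symm) hd x hhd hx
      have hhdf : OneFac A B hd := hw.1 hd (mem_of_head?' hhd)
      have hltf : OneFac A B lt := hw.1 lt (mem_of_getLast?' hlt)
      unfold SameFac at hsf hlast hhead
      unfold OneFac at hhdf hltf
      unfold DiffFactors at hxy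
      rcases hsf with ⟨hdA, ltA⟩ | ⟨hdB, ltB⟩
      · have hdB' : hd ∉ B := fun h => hhdf.2 ⟨hdA, h⟩
        have ltB' : lt ∉ B := fun h => hltf.2 ⟨ltA, h⟩
        have hxA : x ∈ A := by
          rcases hhead with ⟨_, h⟩ | ⟨h, _⟩
          · exact h
          · exact absurd h hdB'
        have hyA : y ∈ A := by
          rcases hlast with ⟨_, h⟩ | ⟨h, _⟩
          · exact h
          · exact absurd h ltB'
        exact hxy.1 ⟨hxA, hyA⟩
      · have hdA' : hd ∉ A := fun h => hhdf.2 ⟨h, hdB⟩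
        have ltA' : lt ∉ A := fun h => hltf.2 ⟨h, ltB⟩
        have hxB : x ∈ B := by
          rcases hhead with ⟨h, _⟩ | ⟨_, h⟩
          · exact absurd h hdA'
          · exact h
        have hyB : y ∈ B := by
          rcases hlast with ⟨h, _⟩ | ⟨_, h⟩
          · exact absurd h ltA'
          · exact h
        exact hxy.2 ⟨hxB, hyB⟩

theorem rot_all {l : List Γ} (hl : ReducedSeq A B l) (h2 : 2 ≤ l.length)
    (hend : ∀ x ∈ l.head?, ∀ y ∈ l.getLast?, DiffFactors A B x y) (j : ℕ) :
    ReducedSeq A B (l.rotate j) ∧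
      ∀ x ∈ (l.rotate j).head?, ∀ y ∈ (l.rotate j).getLast?, DiffFactors A B x y := by
  induction j with
  | zero => simpa [List.rotate_zero] using ⟨hl, hend⟩
  | succ j ih =>
    obtain ⟨hred, hen⟩ := ih
    have hlen : (l.rotate j).length = l.length := List.length_rotate l j
    obtain ⟨x, t, hxt⟩ : ∃ x t, l.rotate j = x :: t := by
      cases h : l.rotate j with
      | nil => rw [h] at hlen; simp at hlen; omega
      | cons a b => exact ⟨a, b, rfl⟩
    have htne : t ≠ [] := by
      intro h
      rw [hxt, h] at hlen
      simp at hlen; omega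
    have hrot1 : l.rotate (j + 1) = t ++ [x] := by
      rw [← List.rotate_rotate, hxt, List.rotate_cons_succ, List.rotate_zero]
    rw [hrot1]
    rw [hxt] at hred hen
    obtain ⟨hx1, ht, hj⟩ := reducedSeq_append.1 (show ReducedSeq A B ([x] ++ t) from hred)
    constructor
    · rw [reducedSeq_append]
      refine ⟨ht, hx1, ?_⟩
      intro u hu v hv
      simp only [List.head?_cons, Option.mem_def, Option.some.injEq] at hv
      subst hv
      have hu2 : u ∈ (x :: t).getLast? := by
        rw [show (x :: t) = [x] ++ t from rfl, List.getLast?_append_of_ne_nil _ htne]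
        exact hu
      exact diffFactors_symm (hen x (by simp) u hu2)
    · intro u hu v hv
      rw [List.head?_append_of_ne_nil _ htne] at hu
      rw [List.getLast?_concat] at hv
      simp only [Option.mem_def, Option.some.injEq] at hv
      subst hv
      exact diffFactors_symm (hj x (by simp) u hu)

theorem core_alpha (A B : Subgroup Γ) (hAB : IsAmalgam A B) {γ : Γ}
    (hcyc : AmCyclicallyReduced A B γ) (lg' : List Γ) (gm q1 : Γ) (t : List Γ)
    (hlg : ReducedSeq A B (lg' ++ [gm])) (hq : ReducedSeq A B (q1 :: t)) (htne : t ≠ [])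
    (hqend : ∀ y ∈ (q1 :: t).getLast?, DiffFactors A B q1 y)
    (hgmA : gm ∈ A) (hgmB : gm ∉ B) (hq1A : q1 ∈ A) (hq1B : q1 ∉ B)
    (hγ : γ = (lg' ++ [gm]).prod * (q1 :: t).prod * ((lg' ++ [gm]).prod)⁻¹) :
    gm * q1 ∈ A ⊓ B := by
  by_contra hC
  have haA : gm * q1 ∈ A := mul_mem hgmA hq1A
  have haB : gm * q1 ∉ B := fun h => hC (mem_inf_iff.2 ⟨haA, h⟩)
  obtain ⟨hlg', hgmr, hjlg⟩ := reducedSeq_append.1 hlg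
  obtain ⟨hq1r, ht, hjq⟩ := reducedSeq_append.1 (show ReducedSeq A B ([q1] ++ t) from hq)
  obtain ⟨qr, hqr⟩ : ∃ qr, t.getLast? = some qr := by
    rcases t.eq_nil_or_concat' with rfl | ⟨t₀, qr, rfl⟩
    · exact absurd rfl htne
    · exact ⟨qr, List.getLast?_concat⟩
  have hqrt : qr ∈ (q1 :: t).getLast? := by
    rw [show (q1 :: t) = [q1] ++ t from rfl, List.getLast?_append_of_ne_nil _ htne]
    exact hqr
  have hq1qr := hqend qr hqrt
  have hqrA : qr ∉ A := fun h => hq1qr.1 ⟨hq1A, h⟩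
  have hwred : ReducedSeq A B (((lg' ++ [gm * q1]) ++ t) ++ invRev (lg' ++ [gm])) := by
    rw [reducedSeq_append, reducedSeq_append, reducedSeq_append]
    refine ⟨⟨⟨hlg', red_singleton ⟨Or.inl haA, fun h => haB h.2⟩, ?_⟩, ht, ?_⟩,
      invRev_reducedSeq hlg, ?_⟩
    · intro u hu v hv
      simp only [List.head?_cons, Option.mem_def, Option.some.injEq] at hv
      subst hv
      have hdu := hjlg u hu gm (by simp)
      have h2 := opp_of_diff (hlg'.1 u (mem_of_getLast?' hu)) hdu hgmA
      exact ⟨fun hc => h2.2 hc.1, fun hc => haB hc.2⟩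
    · intro u hu v hv
      rw [List.getLast?_concat] at hu
      simp only [Option.mem_def, Option.some.injEq] at hu
      subst hu
      have hdv := diffFactors_symm (hjq q1 (by simp) v hv)
      have h2 := opp_of_diff (ht.1 v (mem_of_head?' hv)) hdv hq1A
      exact ⟨fun hc => h2.2 hc.2, fun hc => haB hc.1⟩
    · intro u hu v hv
      rw [List.getLast?_append_of_ne_nil _ htne] at hu
      rw [hqr] at hu
      simp only [Option.mem_def, Option.some.injEq] at hu
      subst hu
      rw [invRev_head?, List.getLast?_concat] at hv
      simp only [Option.mem_def, Option.map_some, Option.some.injEq] at hv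
      subst hv
      exact ⟨fun hc => hqrA hc.1, fun hc => hgmB (by simpa using hc.2)⟩
  have hwprod : (((lg' ++ [gm * q1]) ++ t) ++ invRev (lg' ++ [gm])).prod = γ := by
    rw [hγ]
    simp only [List.prod_append, List.prod_cons, List.prod_nil, invRev_prod, mul_one]
    group
  have hwlen : 3 ≤ (((lg' ++ [gm * q1]) ++ t) ++ invRev (lg' ++ [gm])).length := by
    have h1 : 1 ≤ t.length := List.length_pos_iff.2 htne
    simp only [List.length_append, invRev_length, List.length_cons, List.length_nil]
    omega
  obtain ⟨hd, lt, hhd, hlt, hsf⟩ :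
      ∃ hd lt, (((lg' ++ [gm * q1]) ++ t) ++ invRev (lg' ++ [gm])).head? = some hd ∧
        (((lg' ++ [gm * q1]) ++ t) ++ invRev (lg' ++ [gm])).getLast? = some lt ∧
        SameFac A B hd lt := by
    have hlast : (((lg' ++ [gm * q1]) ++ t) ++ invRev (lg' ++ [gm])).getLast? =
        ((lg' ++ [gm]).head?).map (·⁻¹) := by
      rw [List.getLast?_append_of_ne_nil _ (by simp), invRev_getLast?]
    cases lg' with
    | nil =>
      refine ⟨gm * q1, gm⁻¹, ?_, ?_, Or.inl ⟨haA, inv_mem hgmA⟩⟩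
      · rw [List.head?_append_of_ne_nil _ (by simp), List.head?_append_of_ne_nil _ (by simp)]
        simp
      · rw [hlast]; simp
    | cons h0 t0 =>
      refine ⟨h0, h0⁻¹, ?_, ?_, ?_⟩
      · rw [List.head?_append_of_ne_nil _ (by simp), List.head?_append_of_ne_nil _ (by simp),
          List.head?_append_of_ne_nil _ (by simp)]
        simp
      · rw [hlast]; simp
      · rcases (hlg.1 h0 (by simp)).1 with h | h
        exacts [Or.inl ⟨h, inv_mem h⟩, Or.inr ⟨h, inv_mem h⟩]
  exact gamma_not_long hAB hcyc _ hwred hwprod hwlen hd lt hhd hlt hsf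

theorem rotate_add_length (l : List Γ) (j : ℕ) : l.rotate (j + l.length) = l.rotate j := by
  rw [← List.rotate_rotate, show l.length = (l.rotate j).length from (List.length_rotate l j).symm,
    List.rotate_length]

theorem rot_drop_take {l : List Γ} (hpos : 0 < l.length) (j : ℕ) :
    l.rotate j = l.drop (j % l.length) ++ l.take (j % l.length) := by
  rw [← List.rotate_mod, List.rotate_eq_drop_append_take (le_of_lt (Nat.mod_lt _ hpos))]

theorem main_aux (hAB : IsAmalgam A B) {γ : Γ} (hcyc : AmCyclicallyReduced A B γ)
    (l : List Γ) (hl : ReducedSeq A B l) (hr : 2 ≤ l.length)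
    (hend : ∀ x ∈ l.head?, ∀ y ∈ l.getLast?, DiffFactors A B x y) :
    ∀ (n : ℕ) (g : Γ) (j : ℕ),
      (g ∈ A ⊓ B ∨ ∃ lg, ReducedSeq A B lg ∧ lg ≠ [] ∧ lg.prod = g ∧ lg.length ≤ n) →
      γ = g * (l.rotate j).prod * g⁻¹ →
      ∃ i < l.length, ∃ c ∈ A ⊓ B, γ = c * (l.drop i ++ l.take i).prod * c⁻¹ := by
  have hpos : 0 < l.length := by omega
  intro n
  induction n with
  | zero =>
    intro g j hg hγ
    rcases hg with hgC | ⟨lg, _, hne, _, hlen0⟩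
    · exact ⟨j % l.length, Nat.mod_lt _ hpos, g, hgC, by rw [hγ, rot_drop_take hpos]⟩
    · have := List.length_pos_iff.2 hne; omega
  | succ n ih =>
    intro g j hg hγ
    rcases hg with hgC | ⟨lg, hlgred, hlgne, hlgprod, hlglen⟩
    · exact ⟨j % l.length, Nat.mod_lt _ hpos, g, hgC, by rw [hγ, rot_drop_take hpos]⟩
    rcases lg.eq_nil_or_concat' with rfl | ⟨lg', gm, rfl⟩
    · exact absurd rfl hlgne
    obtain ⟨hredq, hendq⟩ := rot_all hl hr hend j
    have hqlen : (l.rotate j).length = l.length := List.length_rotate l j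
    obtain ⟨q1, tq, hq1t⟩ : ∃ x t, l.rotate j = x :: t := by
      cases h : l.rotate j with
      | nil => rw [h] at hqlen; simp at hqlen; omega
      | cons a b => exact ⟨a, b, rfl⟩
    have htqne : tq ≠ [] := by
      intro h
      rw [hq1t, h] at hqlen
      simp at hqlen; omega
    have hqne : l.rotate j ≠ [] := by rw [hq1t]; simp
    obtain ⟨qr, hqr⟩ : ∃ qr, (l.rotate j).getLast? = some qr :=
      ⟨(l.rotate j).getLast hqne, List.getLast?_eq_getLast _⟩
    have hq1end : DiffFactors A B q1 qr :=
      hendq q1 (by rw [hq1t]; simp) qr hqr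
    have hgmf : OneFac A B gm := hlgred.1 gm (by simp)
    have hq1f : OneFac A B q1 := hredq.1 q1 (by rw [hq1t] at hredq ⊢; simp)
    have hqrf : OneFac A B qr := hredq.1 qr (mem_of_getLast?' hqr)
    have hlgprod' : (lg' ++ [gm]).prod = g := hlgprod
    -- generic recursion step
    have recurse : ∀ (s : Γ) (j' : ℕ), gm * s ∈ A ⊓ B →
        γ = (g * s) * (l.rotate j').prod * (g * s)⁻¹ →
        ∃ i < l.length, ∃ c ∈ A ⊓ B, γ = c * (l.drop i ++ l.take i).prod * c⁻¹ := by
      intro s j' hsC hγ'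
      have hgs : g * s = lg'.prod * (gm * s) := by
        rw [← hlgprod']
        simp [List.prod_append, mul_assoc]
      rcases lg'.eq_nil_or_concat' with rfl | ⟨lg'', y, rfl⟩
      · refine ih (g * s) j' (Or.inl ?_) hγ'
        rw [hgs]; simpa using hsC
      · have hlg'red : ReducedSeq A B (lg'' ++ [y]) := (reducedSeq_append.1 hlgred).1
        refine ih (g * s) j'
          (Or.inr ⟨lg'' ++ [y * (gm * s)], absorb_right hlg'red hsC, by simp, ?_, ?_⟩) hγ'
        · rw [hgs]
          simp [List.prod_append, mul_assoc]
        · have : ((lg'' ++ [y]) ++ [gm]).length ≤ n + 1 := hlglen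
          simp only [List.length_append, List.length_cons, List.length_nil] at this ⊢
          omega
    -- hγ in lg form
    have hγlg : γ = (lg' ++ [gm]).prod * (l.rotate j).prod * ((lg' ++ [gm]).prod)⁻¹ := by
      rw [hlgprod']; exact hγ
    rcases diff_or_same hgmf hq1f with hd | ⟨h1, h2, h3, h4⟩ | ⟨h1, h2, h3, h4⟩
    · -- case β : gm and qr in the same factor
      -- identify the previous rotation
      have hplen : (l.rotate (j + (l.length - 1))).length = l.length := List.length_rotate l _
      obtain ⟨p1, tp, hp⟩ : ∃ x t, l.rotate (j + (l.length - 1)) = x :: t := by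
        cases h : l.rotate (j + (l.length - 1)) with
        | nil => rw [h] at hplen; simp at hplen; omega
        | cons a b => exact ⟨a, b, rfl⟩
      have hrot1 : (l.rotate (j + (l.length - 1))).rotate 1 = l.rotate j := by
        rw [List.rotate_rotate, show j + (l.length - 1) + 1 = j + l.length by omega,
          rotate_add_length]
      have htp : tp ++ [p1] = l.rotate j := by
        rw [← hrot1, hp, List.rotate_cons_succ, List.rotate_zero]
      have hp1qr : p1 = qr := by
        have h0 : (tp ++ [p1]).getLast? = some qr := by rw [htp]; exact hqr
        rw [List.getLast?_concat] at h0
        exact Option.some.inj h0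
      rw [hp1qr] at hp htp
      -- memberships of gm, qr, q1
      rcases hq1f.1 with hq1A | hq1B
      · -- q1 ∈ A only, so gm, qr ∈ B only
        have hq1B : q1 ∉ B := fun h => hq1f.2 ⟨hq1A, h⟩
        have hgmB := opp_of_diff hgmf hd hq1A
        have hqrB := opp_of_diff hqrf (diffFactors_symm hq1end) hq1A
        -- apply core_alpha with roles of A,B swapped, to γ⁻¹ and invRev q
        have hinvq : invRev (l.rotate j) = qr⁻¹ :: invRev tp := by
          rw [← htp, invRev_append]
          simp [invRev]
        have htpne : tp ≠ [] := by
          intro h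
          rw [h] at htp
          rw [← htp] at hqlen
          simp at hqlen; omega
        have hinvne : invRev tp ≠ [] := by simpa using htpne
        have hqend' : ∀ y ∈ (qr⁻¹ :: invRev tp).getLast?, DiffFactors B A qr⁻¹ y := by
          intro y hy
          rw [← hinvq, invRev_getLast?, hq1t] at hy
          simp only [List.head?_cons, Option.mem_def, Option.map_some, Option.some.injEq] at hy
          subst hy
          exact diffFactors_comm (diffFactors_inv_both (diffFactors_symm hq1end))
        have hredinv : ReducedSeq B A (qr⁻¹ :: invRev tp) := by
          rw [← hinvq]
          exact reducedSeq_comm (invRev_reducedSeq hredq)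
        have hγinv : γ⁻¹ = (lg' ++ [gm]).prod * (qr⁻¹ :: invRev tp).prod *
            ((lg' ++ [gm]).prod)⁻¹ := by
          rw [← hinvq, invRev_prod, hγlg]
          group
        have hb := core_alpha B A (isAmalgam_comm hAB) (amCyc_comm (amCyc_inv hcyc)) lg' gm qr⁻¹
          (invRev tp) (reducedSeq_comm hlgred) hredinv hinvne hqend'
          hgmB.1 hgmB.2 (inv_mem hqrB.1) (fun h => hqrB.2 (by simpa using h)) hγinv
        rw [Subgroup.mem_inf] at hb
        have hbC : gm * qr⁻¹ ∈ A ⊓ B := mem_inf_iff.2 ⟨hb.2, hb.1⟩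
        refine recurse qr⁻¹ (j + (l.length - 1)) hbC ?_
        have hqprod : (l.rotate j).prod = qr⁻¹ * (l.rotate (j + (l.length - 1))).prod * qr := by
          rw [hp, ← htp]
          simp only [List.prod_append, List.prod_cons, List.prod_nil, mul_one]
          group
        rw [hγ, hqprod]
        group
      · -- q1 ∈ B only, so gm, qr ∈ A only
        have hq1A : q1 ∉ A := fun h => hq1f.2 ⟨h, hq1B⟩
        have hgmA := opp_of_diff (A := B) (B := A) (oneFac_comm hgmf) (diffFactors_comm hd) hq1B
        have hqrA := opp_of_diff (A := B) (B := A) (oneFac_comm hqrf)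
          (diffFactors_comm (diffFactors_symm hq1end)) hq1B
        have hinvq : invRev (l.rotate j) = qr⁻¹ :: invRev tp := by
          rw [← htp, invRev_append]
          simp [invRev]
        have htpne : tp ≠ [] := by
          intro h
          rw [h] at htp
          rw [← htp] at hqlen
          simp at hqlen; omega
        have hinvne : invRev tp ≠ [] := by simpa using htpne
        have hqend' : ∀ y ∈ (qr⁻¹ :: invRev tp).getLast?, DiffFactors A B qr⁻¹ y := by
          intro y hy
          rw [← hinvq, invRev_getLast?, hq1t] at hy
          simp only [List.head?_cons, Option.mem_def, Option.map_some, Option.some.injEq] at hy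
          subst hy
          exact diffFactors_inv_both (diffFactors_symm hq1end)
        have hredinv : ReducedSeq A B (qr⁻¹ :: invRev tp) := by
          rw [← hinvq]
          exact invRev_reducedSeq hredq
        have hγinv : γ⁻¹ = (lg' ++ [gm]).prod * (qr⁻¹ :: invRev tp).prod *
            ((lg' ++ [gm]).prod)⁻¹ := by
          rw [← hinvq, invRev_prod, hγlg]
          group
        have hbC := core_alpha A B hAB (amCyc_inv hcyc) lg' gm qr⁻¹
          (invRev tp) hlgred hredinv hinvne hqend'
          hgmA.1 hgmA.2 (inv_mem hqrA.1) (fun h => hqrA.2 (by simpa using h)) hγinv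
        refine recurse qr⁻¹ (j + (l.length - 1)) hbC ?_
        have hqprod : (l.rotate j).prod = qr⁻¹ * (l.rotate (j + (l.length - 1))).prod * qr := by
          rw [hp, ← htp]
          simp only [List.prod_append, List.prod_cons, List.prod_nil, mul_one]
          group
        rw [hγ, hqprod]
        group
    · -- case α with gm, q1 ∈ A only
      have hqend1 : ∀ y ∈ (q1 :: tq).getLast?, DiffFactors A B q1 y := by
        intro y hy
        exact hendq q1 (by rw [hq1t]; simp) y (by rw [hq1t]; exact hy)
      have hredq1 : ReducedSeq A B (q1 :: tq) := by rw [← hq1t]; exact hredq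
      have hγq : γ = (lg' ++ [gm]).prod * (q1 :: tq).prod * ((lg' ++ [gm]).prod)⁻¹ := by
        rw [hγlg, hq1t]
      have haC := core_alpha A B hAB hcyc lg' gm q1 tq hlgred hredq1 htqne hqend1 h1 h2 h3 h4 hγq
      refine recurse q1 (j + 1) haC ?_
      have hrot1 : l.rotate (j + 1) = tq ++ [q1] := by
        rw [← List.rotate_rotate, hq1t, List.rotate_cons_succ, List.rotate_zero]
      rw [hγ, hq1t, hrot1]
      simp only [List.prod_append, List.prod_cons, List.prod_nil, mul_one]
      group
    · -- case α with gm, q1 ∈ B only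
      have hqend1 : ∀ y ∈ (q1 :: tq).getLast?, DiffFactors B A q1 y := by
        intro y hy
        exact diffFactors_comm (hendq q1 (by rw [hq1t]; simp) y (by rw [hq1t]; exact hy))
      have hredq1 : ReducedSeq B A (q1 :: tq) := by
        rw [← hq1t]; exact reducedSeq_comm hredq
      have hγq : γ = (lg' ++ [gm]).prod * (q1 :: tq).prod * ((lg' ++ [gm]).prod)⁻¹ := by
        rw [hγlg, hq1t]
      have haC := core_alpha B A (isAmalgam_comm hAB) (amCyc_comm hcyc) lg' gm q1 tq
        (reducedSeq_comm hlgred) hredq1 htqne hqend1 h1 h2 h3 h4 hγq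
      rw [Subgroup.mem_inf] at haC
      have haC' : gm * q1 ∈ A ⊓ B := mem_inf_iff.2 ⟨haC.2, haC.1⟩
      refine recurse q1 (j + 1) haC' ?_
      have hrot1 : l.rotate (j + 1) = tq ++ [q1] := by
        rw [← List.rotate_rotate, hq1t, List.rotate_cons_succ, List.rotate_zero]
      rw [hγ, hq1t, hrot1]
      simp only [List.prod_append, List.prod_cons, List.prod_nil, mul_one]
      group

end AmalgamAux


/-- Conjugation theorem in an amalgam, case (iii): if the cyclically reduced
element `γ` is conjugate to a cyclically reduced element with reduced form
`p_1 p_2 ⋯ p_r`, `r > 1`, then `γ` is obtained by conjugating some cyclic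
conjugate `p_i ⋯ p_r p_1 ⋯ p_{i-1}` by an element of `C = A ⊓ B`. -/
theorem amalgam_conj_cyclic_conjugate (A B : Subgroup Γ) (hAB : IsAmalgam A B)
    (γ : Γ) (hcyc : AmCyclicallyReduced A B γ) (l : List Γ)
    (hl : ReducedSeq A B l) (hlen : 1 < l.length)
    (hform : ∃ x y, l.head? = some x ∧ l.getLast? = some y ∧ DiffFactors A B x y)
    (hconj : ∃ g : Γ, γ = g * l.prod * g⁻¹) :
    ∃ i < l.length, ∃ c ∈ A ⊓ B,
      γ = c * (l.drop i ++ l.take i).prod * c⁻¹ := by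
  obtain ⟨g, hg⟩ := hconj
  obtain ⟨x, y, hx, hy, hxy⟩ := hform
  have hr : 2 ≤ l.length := hlen
  have hend : ∀ x' ∈ l.head?, ∀ y' ∈ l.getLast?, DiffFactors A B x' y' := by
    intro x' hx' y' hy'
    rw [Option.mem_def, hx] at hx'
    rw [Option.mem_def, hy] at hy'
    injection hx' with h1
    injection hy' with h2
    subst h1; subst h2
    exact hxy
  have hγ0 : γ = g * (l.rotate 0).prod * g⁻¹ := by rw [List.rotate_zero]; exact hg
  rcases AmalgamAux.hasForm_all hAB g with hgC | ⟨lg, h1, h2, h3⟩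
  · exact AmalgamAux.main_aux hAB hcyc l hl hr hend 0 g 0 (Or.inl hgC) hγ0
  · exact AmalgamAux.main_aux hAB hcyc l hl hr hend lg.length g 0
      (Or.inr ⟨lg, h1, h2, h3, le_rfl⟩) hγ0
end

section
/- In Γ = A *_C B, if γ and γ' are two cyclically reduced elements that are conjugate in Γ, then γ and γ' have the same length, |γ| = |γ'|. -/
/-!
Internal characterization of the amalgamated free product `Γ = A *_C B`:
`A` and `B` are subgroups of `Γ` generating `Γ`, the amalgamated subgroup is
`C = A ⊓ B`, and (normal form theorem) the product of any nonempty reduced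
sequence is nontrivial.
-/

variable {Γ : Type*} [Group Γ]

/-- `g` has length `n` in the amalgam: `n = 1` when `g` lies in a factor, and
otherwise `n` is the length of a reduced form of `g`. -/
def AmLength (A B : Subgroup Γ) (g : Γ) (n : ℕ) : Prop :=
  (n = 1 ∧ (g ∈ A ∨ g ∈ B)) ∨
    ∃ l : List Γ, l ≠ [] ∧ ReducedSeq A B l ∧ l.prod = g ∧ l.length = n

namespace AmAux

variable (A B : Subgroup Γ)

/-- x is a letter -/
def Ltr (x : Γ) : Prop := (x ∈ A ∨ x ∈ B) ∧ ¬(x ∈ A ∧ x ∈ B)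

variable {A B}

lemma diff_symm {x y : Γ} (h : DiffFactors A B x y) : DiffFactors A B y x := by
  unfold DiffFactors at *; tauto

lemma diff_congr {x x' y : Γ} (hA : x ∈ A ↔ x' ∈ A) (hB : x ∈ B ↔ x' ∈ B)
    (h : DiffFactors A B x y) : DiffFactors A B x' y := by
  unfold DiffFactors at *; tauto

lemma diff_congr' {x y y' : Γ} (hA : y ∈ A ↔ y' ∈ A) (hB : y ∈ B ↔ y' ∈ B)
    (h : DiffFactors A B x y) : DiffFactors A B x y' := by
  unfold DiffFactors at *; tauto

lemma not_diff_iff {x y : Γ} (hx : Ltr A B x) (hy : Ltr A B y) :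
    ¬ DiffFactors A B x y ↔ ((x ∈ A ∧ y ∈ A) ∨ (x ∈ B ∧ y ∈ B)) := by
  unfold DiffFactors Ltr at *; tauto

lemma ltr_inv {x : Γ} (hx : Ltr A B x) : Ltr A B x⁻¹ := by
  unfold Ltr at *; simp only [inv_mem_iff]; exact hx

lemma diff_inv_right {x y : Γ} (h : DiffFactors A B x y) : DiffFactors A B x y⁻¹ :=
  diff_congr' (by simp [inv_mem_iff]) (by simp [inv_mem_iff]) h

lemma diff_inv_left {x y : Γ} (h : DiffFactors A B x y) : DiffFactors A B x⁻¹ y :=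
  diff_congr (by simp [inv_mem_iff]) (by simp [inv_mem_iff]) h

lemma reduced_mem {l : List Γ} (h : ReducedSeq A B l) {x : Γ} (hx : x ∈ l) : Ltr A B x :=
  h.1 x hx

lemma reduced_append {l m : List Γ} (hl : ReducedSeq A B l) (hm : ReducedSeq A B m)
    (h : ∀ x ∈ l.getLast?, ∀ y ∈ m.head?, DiffFactors A B x y) :
    ReducedSeq A B (l ++ m) := by
  refine ⟨?_, ?_⟩
  · intro g hg; rcases List.mem_append.1 hg with hg | hg
    · exact hl.1 g hg
    · exact hm.1 g hg
  · exact List.isChain_append.2 ⟨hl.2, hm.2, h⟩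

lemma reduced_of_append_left {l m : List Γ} (h : ReducedSeq A B (l ++ m)) :
    ReducedSeq A B l :=
  ⟨fun g hg => h.1 g (List.mem_append.2 (Or.inl hg)), (List.isChain_append.1 h.2).1⟩

lemma reduced_of_append_right {l m : List Γ} (h : ReducedSeq A B (l ++ m)) :
    ReducedSeq A B m :=
  ⟨fun g hg => h.1 g (List.mem_append.2 (Or.inr hg)), (List.isChain_append.1 h.2).2.1⟩

lemma reduced_append_diff {l m : List Γ} (h : ReducedSeq A B (l ++ m)) :
    ∀ x ∈ l.getLast?, ∀ y ∈ m.head?, DiffFactors A B x y :=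
  (List.isChain_append.1 h.2).2.2

lemma reduced_cons_iff {a : Γ} {l : List Γ} :
    ReducedSeq A B (a :: l) ↔
      Ltr A B a ∧ ReducedSeq A B l ∧ ∀ y ∈ l.head?, DiffFactors A B a y := by
  constructor
  · intro h
    refine ⟨h.1 a (by simp), ⟨fun g hg => h.1 g (by simp [hg]), (List.isChain_cons.1 h.2).2⟩,
      (List.isChain_cons.1 h.2).1⟩
  · rintro ⟨ha, hl, hd⟩
    refine ⟨?_, List.isChain_cons.2 ⟨hd, hl.2⟩⟩
    intro g hg; rcases List.mem_cons.1 hg with rfl | hg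
    · exact ha
    · exact hl.1 g hg

/-- modify head by an element of C -/
lemma reduced_modHead {c y : Γ} {t : List Γ} (hcA : c ∈ A) (hcB : c ∈ B)
    (h : ReducedSeq A B (y :: t)) : ReducedSeq A B ((c * y) :: t) := by
  rcases reduced_cons_iff.1 h with ⟨hy, ht, hd⟩
  refine reduced_cons_iff.2 ⟨?_, ht, ?_⟩
  · unfold Ltr at *
    simp only [mul_mem_cancel_left hcA, mul_mem_cancel_left hcB]; exact hy
  · intro z hz
    exact diff_congr (by simp [mul_mem_cancel_left hcA]) (by simp [mul_mem_cancel_left hcB])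
      (hd z hz)

lemma reduced_concat_iff {a : Γ} {l : List Γ} :
    ReducedSeq A B (l ++ [a]) ↔
      Ltr A B a ∧ ReducedSeq A B l ∧ ∀ x ∈ l.getLast?, DiffFactors A B x a := by
  constructor
  · intro h
    refine ⟨h.1 a (by simp), reduced_of_append_left h, ?_⟩
    intro x hx
    exact reduced_append_diff h x hx a rfl
  · rintro ⟨ha, hl, hd⟩
    refine reduced_append hl ⟨fun g hg => by simp only [List.mem_singleton] at hg; subst hg; exact ha, List.isChain_singleton _⟩ ?_
    intro x hx y hy
    simp only [List.head?_cons, Option.mem_def, Option.some.injEq] at hy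
    subst hy; exact hd x hx

lemma reduced_modLast {c y : Γ} {l : List Γ} (hcA : c ∈ A) (hcB : c ∈ B)
    (h : ReducedSeq A B (l ++ [y])) : ReducedSeq A B (l ++ [y * c]) := by
  rcases reduced_concat_iff.1 h with ⟨hy, hl, hd⟩
  refine reduced_concat_iff.2 ⟨?_, hl, ?_⟩
  · unfold Ltr at *
    simp only [mul_mem_cancel_right hcA, mul_mem_cancel_right hcB]; exact hy
  · intro x hx
    exact diff_congr' (by simp [mul_mem_cancel_right hcA]) (by simp [mul_mem_cancel_right hcB])
      (hd x hx)

lemma reduced_invRev {l : List Γ} (h : ReducedSeq A B l) :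
    ReducedSeq A B ((l.map fun x => x⁻¹).reverse) := by
  refine ⟨?_, ?_⟩
  · intro g hg
    simp only [List.mem_reverse, List.mem_map] at hg
    rcases hg with ⟨x, hx, rfl⟩
    exact ltr_inv (h.1 x hx)
  · rw [List.Chain', List.isChain_reverse, List.isChain_map]
    refine List.IsChain.imp ?_ h.2
    intro a b hab
    exact diff_inv_left (diff_inv_right (diff_symm hab))

lemma prod_invRev (l : List Γ) : ((l.map fun x => x⁻¹).reverse).prod = l.prod⁻¹ :=
  (List.prod_inv_reverse l).symm

lemma reduced_singleton {x : Γ} (hx : Ltr A B x) : ReducedSeq A B [x] :=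
  ⟨fun g hg => by simp only [List.mem_singleton] at hg; subst hg; exact hx, List.isChain_singleton _⟩

lemma mul_ltr {x y : Γ} (hx : Ltr A B x) (hy : Ltr A B y)
    (hs : (x ∈ A ∧ y ∈ A) ∨ (x ∈ B ∧ y ∈ B)) (hz : ¬(x * y ∈ A ∧ x * y ∈ B)) :
    Ltr A B (x * y) ∧ (x * y ∈ A ↔ x ∈ A) ∧ (x * y ∈ B ↔ x ∈ B) ∧
      (x * y ∈ A ↔ y ∈ A) ∧ (x * y ∈ B ↔ y ∈ B) := by
  rcases hs with ⟨h1, h2⟩ | ⟨h1, h2⟩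
  · have hzA : x * y ∈ A := mul_mem h1 h2
    have hzB : x * y ∉ B := fun h => hz ⟨hzA, h⟩
    have hxB : x ∉ B := fun h => hx.2 ⟨h1, h⟩
    have hyB : y ∉ B := fun h => hy.2 ⟨h2, h⟩
    exact ⟨⟨Or.inl hzA, fun h => hzB h.2⟩, ⟨fun _ => h1, fun _ => hzA⟩,
      ⟨fun h => absurd h hzB, fun h => absurd h hxB⟩,
      ⟨fun _ => h2, fun _ => hzA⟩, ⟨fun h => absurd h hzB, fun h => absurd h hyB⟩⟩
  · have hzB : x * y ∈ B := mul_mem h1 h2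
    have hzA : x * y ∉ A := fun h => hz ⟨h, hzB⟩
    have hxA : x ∉ A := fun h => hx.2 ⟨h, h1⟩
    have hyA : y ∉ A := fun h => hy.2 ⟨h, h2⟩
    exact ⟨⟨Or.inr hzB, fun h => hzA h.1⟩, ⟨fun h => absurd h hzA, fun h => absurd h hxA⟩,
      ⟨fun _ => h1, fun _ => hzB⟩, ⟨fun h => absurd h hzA, fun h => absurd h hyA⟩,
      ⟨fun _ => h2, fun _ => hzB⟩⟩

lemma key_aux (hAB : IsAmalgam A B) :
    ∀ n (l m : List Γ), l.length + m.length ≤ n →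
      ReducedSeq A B l → ReducedSeq A B m → (l ++ m).prod = 1 →
      l.length = m.length := by
  intro n
  induction n with
  | zero =>
    intro l m hlen _ _ _
    have h1 : l = [] := List.length_eq_zero_iff.1 (by omega)
    have h2 : m = [] := List.length_eq_zero_iff.1 (by omega)
    rw [h1, h2]
  | succ n ih =>
    intro l m hlen hl hm hprod
    rcases List.eq_nil_or_concat l with rfl | ⟨l₀, x, rfl⟩
    · simp only [List.nil_append] at hprod
      rcases m with _ | ⟨y, t⟩
      · rfl
      · exact absurd hprod (hAB.2 _ hm (by simp))
    simp only [List.concat_eq_append] at *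
    rcases m with _ | ⟨y, t⟩
    · exact absurd (by simpa using hprod) (hAB.2 _ hl (by simp))
    rcases reduced_concat_iff.1 hl with ⟨hx, hl₀, hdl⟩
    rcases reduced_cons_iff.1 hm with ⟨hy, ht, hdm⟩
    by_cases hd : DiffFactors A B x y
    · have hred : ReducedSeq A B ((l₀ ++ [x]) ++ (y :: t)) := by
        refine reduced_append hl hm ?_
        intro u hu v hv
        simp only [List.getLast?_concat, Option.mem_def, Option.some.injEq] at hu
        simp only [List.head?_cons, Option.mem_def, Option.some.injEq] at hv
        subst hu; subst hv; exact hd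
      exact absurd hprod (hAB.2 _ hred (by simp))
    have hsame := (not_diff_iff hx hy).1 hd
    by_cases hz : x * y ∈ A ∧ x * y ∈ B
    · -- x*y lies in C : cancellation
      rcases t with _ | ⟨y₂, t₂⟩
      · -- m = [y]
        rcases List.eq_nil_or_concat l₀ with rfl | ⟨r, w, rfl⟩
        · simp
        · exfalso
          simp only [List.concat_eq_append] at *
          have hred : ReducedSeq A B (r ++ [w * (x * y)]) :=
            reduced_modLast hz.1 hz.2 (reduced_of_append_left hl)
          refine hAB.2 _ hred (by simp) ?_
          have : (r ++ [w * (x * y)]).prod = ((r ++ [w] ++ [x]) ++ [y]).prod := by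
            simp [List.prod_append, mul_assoc]
          rw [this]; exact hprod
      · -- recurse
        have htail : ReducedSeq A B (y₂ :: t₂) := ht
        have hm' : ReducedSeq A B ((x * y * y₂) :: t₂) := reduced_modHead hz.1 hz.2 htail
        have hprod' : (l₀ ++ (x * y * y₂) :: t₂).prod = 1 := by
          have : (l₀ ++ (x * y * y₂) :: t₂).prod = ((l₀ ++ [x]) ++ y :: y₂ :: t₂).prod := by
            simp [List.prod_append, List.prod_cons, mul_assoc]
          rw [this]; exact hprod
        have hlen' : l₀.length + ((x * y * y₂) :: t₂).length ≤ n := by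
          simp at hlen ⊢; omega
        have := ih l₀ ((x * y * y₂) :: t₂) hlen' hl₀ hm' hprod'
        simp at this ⊢; omega
    · -- x*y is a letter : merge, contradiction
      exfalso
      obtain ⟨hzl, hxA, hxB, hyA, hyB⟩ := mul_ltr hx hy hsame hz
      have hred : ReducedSeq A B (l₀ ++ (x * y) :: t) := by
        refine reduced_append hl₀ ?_ ?_
        · refine reduced_cons_iff.2 ⟨hzl, (reduced_cons_iff.1 hm).2.1, ?_⟩
          intro v hv
          exact diff_congr hyA.symm hyB.symm (hdm v hv)
        · intro u hu v hv
          simp only [List.head?_cons, Option.mem_def, Option.some.injEq] at hv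
          subst hv
          exact diff_congr' hxA.symm hxB.symm (hdl u hu)
      refine hAB.2 _ hred (by simp) ?_
      have : (l₀ ++ (x * y) :: t).prod = ((l₀ ++ [x]) ++ y :: t).prod := by
        simp [List.prod_append, List.prod_cons, mul_assoc]
      rw [this]; exact hprod

lemma eq_nil_of_prod_in_C (hAB : IsAmalgam A B) {l : List Γ}
    (hl : ReducedSeq A B l) (hA : l.prod ∈ A) (hB : l.prod ∈ B) : l = [] := by
  rcases List.eq_nil_or_concat l with rfl | ⟨l₀, x, rfl⟩
  · rfl
  exfalso
  simp only [List.concat_eq_append] at *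
  have hred : ReducedSeq A B (l₀ ++ [x * (l₀ ++ [x]).prod⁻¹]) :=
    reduced_modLast (inv_mem hA) (inv_mem hB) hl
  refine hAB.2 _ hred (by simp) ?_
  simp only [List.prod_append, List.prod_cons, List.prod_nil, mul_one]
  group

lemma length_le_one_of_prod_mem (hAB : IsAmalgam A B) {l : List Γ}
    (hl : ReducedSeq A B l) (h : l.prod ∈ A ∨ l.prod ∈ B) : l.length ≤ 1 := by
  by_contra hlen
  push_neg at hlen
  by_cases hC : l.prod ∈ A ∧ l.prod ∈ B
  · have := eq_nil_of_prod_in_C hAB hl hC.1 hC.2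
    subst this; simp at hlen
  · have hltr : Ltr A B l.prod⁻¹ := ltr_inv ⟨h, hC⟩
    have := key_aux hAB (l.length + 1) l [l.prod⁻¹] (by simp) hl
      (reduced_singleton hltr) (by simp)
    simp at this; omega

lemma length_unique (hAB : IsAmalgam A B) {l m : List Γ}
    (hl : ReducedSeq A B l) (hm : ReducedSeq A B m) (h : l.prod = m.prod) :
    l.length = m.length := by
  have := key_aux hAB (l.length + ((m.map fun x => x⁻¹).reverse).length) l
    ((m.map fun x => x⁻¹).reverse) le_rfl hl (reduced_invRev hm) ?_
  · simpa using this
  · rw [List.prod_append, prod_invRev, h]; group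

lemma amLength_unique (hAB : IsAmalgam A B) {g : Γ} {n m : ℕ}
    (h1 : AmLength A B g n) (h2 : AmLength A B g m) : n = m := by
  rcases h1 with ⟨rfl, hg1⟩ | ⟨l, hlne, hl, hlp, rfl⟩
  · rcases h2 with ⟨rfl, _⟩ | ⟨l, hlne, hl, hlp, rfl⟩
    · rfl
    · have h1 := length_le_one_of_prod_mem hAB hl (hlp ▸ hg1)
      have h2 : l.length ≠ 0 := fun h => hlne (List.length_eq_zero_iff.1 h)
      omega
  · rcases h2 with ⟨rfl, hg2⟩ | ⟨m', hmne, hm, hmp, rfl⟩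
    · have h1 := length_le_one_of_prod_mem hAB hl (hlp ▸ hg2)
      have h2 : l.length ≠ 0 := fun h => hlne (List.length_eq_zero_iff.1 h)
      omega
    · exact length_unique hAB hl hm (by rw [hlp, hmp])

lemma heads_not_diff (hAB : IsAmalgam A B) {l m : List Γ} (hl : ReducedSeq A B l)
    (hm : ReducedSeq A B m) (h : l.prod = m.prod)
    {x y : Γ} (hx : l.head? = some x) (hy : m.head? = some y) :
    ¬ DiffFactors A B x y := by
  intro hd
  have hk : ((m.map fun u => u⁻¹).reverse).getLast? = some y⁻¹ := by
    rw [List.getLast?_reverse, List.head?_map, hy]; rfl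
  have hred : ReducedSeq A B ((m.map fun u => u⁻¹).reverse ++ l) := by
    refine reduced_append (reduced_invRev hm) hl ?_
    intro u hu v hv
    rw [hk] at hu
    simp only [Option.mem_def, Option.some.injEq] at hu
    rw [hx] at hv
    simp only [Option.mem_def, Option.some.injEq] at hv
    subst hu; subst hv
    exact diff_inv_left (diff_symm hd)
  refine hAB.2 _ hred ?_ ?_
  · intro hnil
    have : l = [] := by
      rcases List.append_eq_nil_iff.1 hnil with ⟨_, h2⟩; exact h2
    rw [this] at hx; simp at hx
  · rw [List.prod_append, prod_invRev, h]; group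

lemma lasts_not_diff (hAB : IsAmalgam A B) {l m : List Γ} (hl : ReducedSeq A B l)
    (hm : ReducedSeq A B m) (h : l.prod = m.prod)
    {x y : Γ} (hx : l.getLast? = some x) (hy : m.getLast? = some y) :
    ¬ DiffFactors A B x y := by
  intro hd
  have hk : ((m.map fun u => u⁻¹).reverse).head? = some y⁻¹ := by
    rw [List.head?_reverse, List.getLast?_map, hy]; rfl
  have hred : ReducedSeq A B (l ++ (m.map fun u => u⁻¹).reverse) := by
    refine reduced_append hl (reduced_invRev hm) ?_
    intro u hu v hv
    rw [hx] at hu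
    simp only [Option.mem_def, Option.some.injEq] at hu
    rw [hk] at hv
    simp only [Option.mem_def, Option.some.injEq] at hv
    subst hu; subst hv
    exact diff_inv_right hd
  refine hAB.2 _ hred ?_ ?_
  · intro hnil
    have : l = [] := by
      rcases List.append_eq_nil_iff.1 hnil with ⟨h2, _⟩; exact h2
    rw [this] at hx; simp at hx
  · rw [List.prod_append, prod_invRev, h]; group

/-- one-step left multiplication preserves having a reduced form or lying in C -/
lemma step_mul (hAB : IsAmalgam A B) {x : Γ} (hx : x ∈ A ∨ x ∈ B) {g : Γ}
    (hP : (g ∈ A ∧ g ∈ B) ∨ ∃ l, ReducedSeq A B l ∧ l.prod = g) :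
    (x * g ∈ A ∧ x * g ∈ B) ∨ ∃ l, ReducedSeq A B l ∧ l.prod = x * g := by
  by_cases hxgC : x * g ∈ A ∧ x * g ∈ B
  · exact Or.inl hxgC
  rcases hP with ⟨hgA, hgB⟩ | ⟨l, hl, rfl⟩
  · refine Or.inr ⟨[x * g], reduced_singleton ⟨?_, hxgC⟩, by simp⟩
    rcases hx with hx | hx
    · exact Or.inl (mul_mem hx hgA)
    · exact Or.inr (mul_mem hx hgB)
  rcases l with _ | ⟨y, t⟩
  · refine Or.inr ⟨[x * List.prod []], reduced_singleton ⟨?_, hxgC⟩, by simp⟩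
    simp only [List.prod_nil, mul_one]
    exact hx
  by_cases hxC : x ∈ A ∧ x ∈ B
  · exact Or.inr ⟨(x * y) :: t, reduced_modHead hxC.1 hxC.2 hl,
      by simp [List.prod_cons, mul_assoc]⟩
  have hxl : Ltr A B x := ⟨hx, hxC⟩
  rcases reduced_cons_iff.1 hl with ⟨hy, ht, hdm⟩
  by_cases hd : DiffFactors A B x y
  · exact Or.inr ⟨x :: y :: t, reduced_cons_iff.2 ⟨hxl, hl, by
      intro v hv; simp only [List.head?_cons, Option.mem_def, Option.some.injEq] at hv
      subst hv; exact hd⟩, by simp [List.prod_cons, mul_assoc]⟩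
  have hsame := (not_diff_iff hxl hy).1 hd
  by_cases hz : x * y ∈ A ∧ x * y ∈ B
  · rcases t with _ | ⟨y₂, t₂⟩
    · exfalso
      refine hxgC ?_
      simp only [List.prod_cons, List.prod_nil, mul_one, ← mul_assoc] at hxgC ⊢
      exact hz
    · refine Or.inr ⟨(x * y * y₂) :: t₂, reduced_modHead hz.1 hz.2 ht, ?_⟩
      simp [List.prod_cons, mul_assoc]
  · obtain ⟨hzl, _, _, hyA, hyB⟩ := mul_ltr hxl hy hsame hz
    refine Or.inr ⟨(x * y) :: t, reduced_cons_iff.2 ⟨hzl, ht, ?_⟩,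
      by simp [List.prod_cons, mul_assoc]⟩
    intro v hv
    exact diff_congr hyA.symm hyB.symm (hdm v hv)

lemma exists_form (hAB : IsAmalgam A B) (g : Γ) :
    (g ∈ A ∧ g ∈ B) ∨ ∃ l, ReducedSeq A B l ∧ l.prod = g := by
  have hg : g ∈ Subgroup.closure ((A : Set Γ) ∪ (B : Set Γ)) := by
    rw [Subgroup.closure_union, Subgroup.closure_eq, Subgroup.closure_eq, hAB.1]
    trivial
  refine Subgroup.closure_induction_left (p := fun x _ =>
      (x ∈ A ∧ x ∈ B) ∨ ∃ l, ReducedSeq A B l ∧ l.prod = x) ?_ ?_ ?_ hg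
  · exact Or.inl ⟨one_mem A, one_mem B⟩
  · intro x hx y _ hy
    refine step_mul hAB ?_ hy
    rcases hx with hx | hx
    · exact Or.inl hx
    · exact Or.inr hx
  · intro x hx y _ hy
    refine step_mul hAB ?_ hy
    rcases hx with hx | hx
    · exact Or.inl (inv_mem hx)
    · exact Or.inr (inv_mem hx)

lemma not_diff_symm {x y : Γ} (h : ¬ DiffFactors A B x y) : ¬ DiffFactors A B y x :=
  fun hd => h (diff_symm hd)

lemma sameF_of_not_diff {x y : Γ} (h : ¬ DiffFactors A B x y) :
    (x ∈ A ∧ y ∈ A) ∨ (x ∈ B ∧ y ∈ B) := by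
  unfold DiffFactors at h; tauto

lemma not_diff_of_memA {x y : Γ} (hx : x ∈ A) (hy : y ∈ A) : ¬ DiffFactors A B x y :=
  fun hd => hd.1 ⟨hx, hy⟩

lemma not_diff_of_memB {x y : Γ} (hx : x ∈ B) (hy : y ∈ B) : ¬ DiffFactors A B x y :=
  fun hd => hd.2 ⟨hx, hy⟩

lemma not_diff_trans {x y z : Γ} (hy : Ltr A B y) (h1 : ¬ DiffFactors A B x y)
    (h2 : ¬ DiffFactors A B y z) : ¬ DiffFactors A B x z := by
  intro hd
  rcases sameF_of_not_diff h1 with ⟨h1a, h1b⟩ | ⟨h1a, h1b⟩ <;>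
    rcases sameF_of_not_diff h2 with ⟨h2a, h2b⟩ | ⟨h2a, h2b⟩
  · exact hd.1 ⟨h1a, h2b⟩
  · exact hy.2 ⟨h1b, h2a⟩
  · exact hy.2 ⟨h2a, h1b⟩
  · exact hd.2 ⟨h1a, h2b⟩

lemma diff_of_diff_not_diff {b x y : Γ} (hy : Ltr A B y) (h1 : DiffFactors A B b x)
    (h2 : ¬ DiffFactors A B x y) : DiffFactors A B b y := by
  rcases sameF_of_not_diff h2 with ⟨hxA, hyA⟩ | ⟨hxB, hyB⟩
  · exact ⟨fun h => h1.1 ⟨h.1, hxA⟩, fun h => hy.2 ⟨hyA, h.2⟩⟩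
  · exact ⟨fun h => hy.2 ⟨h.2, hyB⟩, fun h => h1.2 ⟨h.1, hxB⟩⟩

lemma not_diff_of_diff_diff {a x y : Γ} (ha : Ltr A B a) (hx : Ltr A B x) (hy : Ltr A B y)
    (h1 : DiffFactors A B a x) (h2 : DiffFactors A B x y) : ¬ DiffFactors A B a y := by
  rcases ha.1 with haA | haB
  · have hxB : x ∈ B := hx.1.resolve_left (fun h => h1.1 ⟨haA, h⟩)
    have hyA : y ∈ A := hy.1.resolve_right (fun h => h2.2 ⟨hxB, h⟩)
    exact fun hd => hd.1 ⟨haA, hyA⟩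
  · have hxA : x ∈ A := hx.1.resolve_right (fun h => h1.2 ⟨haB, h⟩)
    have hyB : y ∈ B := hy.1.resolve_left (fun h => h2.1 ⟨hxA, h⟩)
    exact fun hd => hd.2 ⟨haB, hyB⟩

variable (A B) in
/-- `g` is cyclically reduced with known length `n`. -/
def CRLen (g : Γ) (n : ℕ) : Prop :=
  (n = 1 ∧ (g ∈ A ∨ g ∈ B)) ∨
    ∃ l : List Γ, ReducedSeq A B l ∧ l.prod = g ∧ l.length = n ∧ 2 ≤ n ∧
      ∃ x y, l.head? = some x ∧ l.getLast? = some y ∧ DiffFactors A B x y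

lemma crlen_amLength {g : Γ} {n : ℕ} (h : CRLen A B g n) : AmLength A B g n := by
  rcases h with ⟨rfl, hg⟩ | ⟨l, hl, hp, hlen, h2, _⟩
  · exact Or.inl ⟨rfl, hg⟩
  · exact Or.inr ⟨l, fun hnil => by rw [hnil] at hlen; simp at hlen; omega, hl, hp, hlen⟩

/-- one conjugation step: either the conjugate is again cyclically reduced of the
same length, or it has a reduced form with both ends in the same factor as `a`. -/
lemma step_conj {γ : Γ} {n : ℕ} (hγ : CRLen A B γ n) {a : Γ} (ha : Ltr A B a) :
    CRLen A B (a * γ * a⁻¹) n ∨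
      ∃ L : List Γ, ReducedSeq A B L ∧ L.prod = a * γ * a⁻¹ ∧ 2 ≤ L.length ∧
        ∃ x y, L.head? = some x ∧ L.getLast? = some y ∧
          ¬ DiffFactors A B x y ∧ ¬ DiffFactors A B a x := by
  rcases hγ with ⟨rfl, hgf⟩ | ⟨l, hl, hlp, hlen, h2n, x0, y0, hh0, hl0, hdxy0⟩
  · -- γ lies in a factor
    by_cases hs : (a ∈ A ∧ γ ∈ A) ∨ (a ∈ B ∧ γ ∈ B)
    · left; left
      refine ⟨rfl, ?_⟩
      rcases hs with ⟨h1, h2⟩ | ⟨h1, h2⟩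
      · exact Or.inl (mul_mem (mul_mem h1 h2) (inv_mem h1))
      · exact Or.inr (mul_mem (mul_mem h1 h2) (inv_mem h1))
    · have hγC : ¬(γ ∈ A ∧ γ ∈ B) := by
        intro hC
        rcases ha.1 with h | h
        · exact hs (Or.inl ⟨h, hC.1⟩)
        · exact hs (Or.inr ⟨h, hC.2⟩)
      have hγl : Ltr A B γ := ⟨hgf, hγC⟩
      have hd : DiffFactors A B a γ := by
        by_contra hnd
        exact hs (sameF_of_not_diff hnd)
      right
      refine ⟨[a, γ, a⁻¹], ?_, by simp [List.prod_cons]; group, by simp, a, a⁻¹, rfl, rfl,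
        ?_, ?_⟩
      · refine reduced_cons_iff.2 ⟨ha,
          reduced_cons_iff.2 ⟨hγl, reduced_singleton (ltr_inv ha), ?_⟩, ?_⟩
        · intro v hv
          simp only [List.head?_cons, Option.mem_def, Option.some.injEq] at hv
          subst hv
          exact diff_inv_right (diff_symm hd)
        · intro v hv
          simp only [List.head?_cons, Option.mem_def, Option.some.injEq] at hv
          subst hv
          exact hd
      · rcases ha.1 with h | h
        · exact not_diff_of_memA h (inv_mem h)
        · exact not_diff_of_memB h (inv_mem h)
      · rcases ha.1 with h | h
        · exact not_diff_of_memA h h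
        · exact not_diff_of_memB h h
  · -- γ has a reduced form x :: (m ++ [y]) of length n ≥ 2squeeze, Diff x y
    rcases l with _ | ⟨x, t⟩
    · simp at hh0
    rcases List.eq_nil_or_concat t with rfl | ⟨m, y, rfl⟩
    · simp at hlen
      omega
    simp only [List.concat_eq_append] at hl hlp hlen hl0
    have hx0 : x = x0 := by simpa using hh0
    have hy0 : y = y0 := by
      rw [← List.cons_append, List.getLast?_concat] at hl0
      simpa using hl0
    subst hx0; subst hy0
    have hl2 : ReducedSeq A B ((x :: m) ++ [y]) := by rw [List.cons_append]; exact hl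
    rcases reduced_cons_iff.1 hl with ⟨hx, hmy, hdxh⟩
    have hy : Ltr A B y := hl.1 y (by simp)
    have hxm : ReducedSeq A B (x :: m) := reduced_of_append_left hl2
    have hlastm : ∀ u ∈ (x :: m).getLast?, DiffFactors A B u y := fun u hu =>
      reduced_append_diff hl2 u hu y rfl
    have hγ2 : γ = (x :: m).prod * y := by
      rw [← hlp]; simp [List.prod_cons, List.prod_append, mul_assoc]
    have hlenm : m.length + 2 = n := by simp at hlen; omega
    by_cases hax : DiffFactors A B a x
    -- ===== Case (ii) : a in the factor of y =====
    · have hnday : ¬ DiffFactors A B a y := not_diff_of_diff_diff ha hx hy hax hdxy0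
      have hndya' : ¬ DiffFactors A B y a⁻¹ := by
        intro hdq
        exact (not_diff_symm hnday) (by simpa using diff_inv_right hdq)
      have hs' : (y ∈ A ∧ a⁻¹ ∈ A) ∨ (y ∈ B ∧ a⁻¹ ∈ B) := sameF_of_not_diff hndya'
      by_cases hz : y * a⁻¹ ∈ A ∧ y * a⁻¹ ∈ B
      · -- (ii.a) cancellation into C
        left; right
        obtain ⟨r', w', hq'⟩ : ∃ r' w', x :: m = r' ++ [w'] := by
          rcases List.eq_nil_or_concat (x :: m) with habs | ⟨r', w', h⟩
          · simp at habs
          · exact ⟨r', w', by simpa [List.concat_eq_append] using h⟩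
        have hrw : ReducedSeq A B (r' ++ [w' * (y * a⁻¹)]) :=
          reduced_modLast hz.1 hz.2 (hq' ▸ hxm)
        have hw'A : w' * (y * a⁻¹) ∈ A ↔ w' ∈ A := mul_mem_cancel_right hz.1
        have hw'B : w' * (y * a⁻¹) ∈ B ↔ w' ∈ B := mul_mem_cancel_right hz.2
        have hw'last : (x :: m).getLast? = some w' := by rw [hq', List.getLast?_concat]
        have hdw'y : DiffFactors A B w' y := hlastm w' (by rw [hw'last]; rfl)
        have hdaw' : DiffFactors A B a w' :=
          diff_symm (diff_of_diff_not_diff ha hdw'y (not_diff_symm hnday))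
        have hpm : (x :: m).prod = r'.prod * w' := by rw [hq']; simp [List.prod_append]
        have hlr : r'.length = m.length := by
          have := congrArg List.length hq'
          simp at this
          omega
        refine ⟨(a :: r') ++ [w' * (y * a⁻¹)], ?_, ?_, ?_, ?_, a, w' * (y * a⁻¹),
          by rw [List.cons_append]; rfl, List.getLast?_concat, ?_⟩
        · rw [List.cons_append]
          refine reduced_cons_iff.2 ⟨ha, hrw, ?_⟩
          intro v hv
          rcases r' with _ | ⟨r0, r''⟩
          · simp only [List.nil_append] at hq'
            obtain ⟨rfl, rfl⟩ : x = w' ∧ m = [] := by simpa using hq'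
            simp only [List.nil_append, List.head?_cons, Option.mem_def,
              Option.some.injEq] at hv
            subst hv
            exact diff_congr' hw'A.symm hw'B.symm hax
          · obtain ⟨rfl, -⟩ : r0 = x ∧ r'' ++ [w'] = m := by
              have := hq'.symm
              simpa [List.cons_append] using this
            simp only [List.cons_append, List.head?_cons, Option.mem_def,
              Option.some.injEq] at hv
            subst hv
            exact hax
        · simp only [List.prod_append, List.prod_cons, List.prod_nil, mul_one]
          rw [hγ2, hpm]
          group
        · simp
          omega
        · omega
        · exact diff_congr' hw'A.symm hw'B.symm hdaw'
      · -- (ii.b) no cancellation: bad reduced form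
        right
        obtain ⟨hz'l, hz'yA, hz'yB, hz'aA, hz'aB⟩ := mul_ltr hy (ltr_inv ha) hs' hz
        refine ⟨(a :: x :: m) ++ [y * a⁻¹], ?_, ?_, by simp, a, y * a⁻¹,
          by rw [List.cons_append]; rfl, List.getLast?_concat, ?_, ?_⟩
        · refine reduced_concat_iff.2 ⟨hz'l, ?_, ?_⟩
          · refine reduced_cons_iff.2 ⟨ha, hxm, ?_⟩
            intro v hv
            simp only [List.head?_cons, Option.mem_def, Option.some.injEq] at hv
            subst hv
            exact hax
          · intro u hu
            rw [List.getLast?_cons_cons] at hu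
            exact diff_congr' hz'yA.symm hz'yB.symm (hlastm u hu)
        · rw [hγ2]
          simp only [List.prod_append, List.prod_cons, List.prod_nil, mul_one]
          group
        · rcases ha.1 with h | h
          · exact not_diff_of_memA h (hz'aA.2 (inv_mem h))
          · exact not_diff_of_memB h (hz'aB.2 (inv_mem h))
        · rcases ha.1 with h | h
          · exact not_diff_of_memA h h
          · exact not_diff_of_memB h h
    -- ===== Case (i) : a in the factor of x =====
    · have hs1 : (a ∈ A ∧ x ∈ A) ∨ (a ∈ B ∧ x ∈ B) := sameF_of_not_diff hax
      obtain ⟨w, r, hq⟩ : ∃ w r, m ++ [y] = w :: r := by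
        rcases m with _ | ⟨c, m'⟩
        · exact ⟨y, [], rfl⟩
        · exact ⟨c, m' ++ [y], rfl⟩
      have hwr : ReducedSeq A B (w :: r) := hq ▸ hmy
      have hdxw : DiffFactors A B x w := hdxh w (by rw [hq]; rfl)
      have hdya : DiffFactors A B y a :=
        diff_of_diff_not_diff ha (diff_symm hdxy0) (not_diff_symm hax)
      have hwlast : (w :: r).getLast? = some y := by rw [← hq, List.getLast?_concat]
      have hlr : r.length = m.length := by
        have := congrArg List.length hq
        simp at this
        omega
      have hγ3 : γ = x * (w :: r).prod := by
        rw [← hlp, hq]; simp [List.prod_cons]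
      by_cases hz : a * x ∈ A ∧ a * x ∈ B
      · -- (i.a) cancellation into C
        left; right
        have h1 : ReducedSeq A B ((a * x * w) :: r) := reduced_modHead hz.1 hz.2 hwr
        have hwA : a * x * w ∈ A ↔ w ∈ A := mul_mem_cancel_left hz.1
        have hwB : a * x * w ∈ B ↔ w ∈ B := mul_mem_cancel_left hz.2
        have hdwa : DiffFactors A B w a :=
          diff_of_diff_not_diff ha (diff_symm hdxw) (not_diff_symm hax)
        refine ⟨((a * x * w) :: r) ++ [a⁻¹], ?_, ?_, ?_, ?_, a * x * w, a⁻¹,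
          by rw [List.cons_append]; rfl, List.getLast?_concat, ?_⟩
        · refine reduced_concat_iff.2 ⟨ltr_inv ha, h1, ?_⟩
          intro u hu
          rcases r with _ | ⟨r0, r'⟩
          · obtain ⟨rfl, rfl⟩ : w = y ∧ m = [] := by
              have := hq.symm
              rcases m with _ | ⟨c, m'⟩
              · constructor
                · simpa using this
                · rfl
              · exfalso
                have hlerr := congrArg List.length hq
                simpa using hlerr
            simp only [List.getLast?_singleton, Option.mem_def, Option.some.injEq] at hu
            subst hu
            exact diff_congr hwA.symm hwB.symm (diff_inv_right hdya)
          · rw [List.getLast?_cons_cons] at hu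
            rw [← List.getLast?_cons_cons (a := w)] at hu
            rw [hwlast] at hu
            simp only [Option.mem_def, Option.some.injEq] at hu
            subst hu
            exact diff_inv_right hdya
        · rw [hγ3]
          simp only [List.prod_append, List.prod_cons, List.prod_nil, mul_one]
          group
        · simp
          omega
        · omega
        · exact diff_congr hwA.symm hwB.symm (diff_inv_right hdwa)
      · -- (i.b) no cancellation: bad reduced form
        right
        obtain ⟨hzl, hzaA, hzaB, hzxA, hzxB⟩ := mul_ltr ha hx hs1 hz
        refine ⟨((a * x) :: w :: r) ++ [a⁻¹], ?_, ?_, by simp, a * x, a⁻¹,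
          by rw [List.cons_append]; rfl, List.getLast?_concat, ?_, ?_⟩
        · refine reduced_concat_iff.2 ⟨ltr_inv ha, ?_, ?_⟩
          · refine reduced_cons_iff.2 ⟨hzl, hwr, ?_⟩
            intro v hv
            simp only [List.head?_cons, Option.mem_def, Option.some.injEq] at hv
            subst hv
            exact diff_congr hzxA.symm hzxB.symm hdxw
          · intro u hu
            rw [List.getLast?_cons_cons, hwlast] at hu
            simp only [Option.mem_def, Option.some.injEq] at hu
            subst hu
            exact diff_inv_right hdya
        · rw [hγ3]
          simp only [List.prod_append, List.prod_cons, List.prod_nil, mul_one]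
          group
        · rcases ha.1 with h | h
          · exact not_diff_of_memA (hzaA.2 h) (inv_mem h)
          · exact not_diff_of_memB (hzaB.2 h) (inv_mem h)
        · rcases ha.1 with h | h
          · exact not_diff_of_memA h (hzaA.2 h)
          · exact not_diff_of_memB h (hzaB.2 h)

lemma persist : ∀ gs : List Γ, ReducedSeq A B gs → ∀ l : List Γ, ReducedSeq A B l →
    2 ≤ l.length →
    (∃ x y, l.head? = some x ∧ l.getLast? = some y ∧ ¬ DiffFactors A B x y) →
    (∀ b ∈ gs.getLast?, ∀ x ∈ l.head?, DiffFactors A B b x) →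
    ∃ L : List Γ, ReducedSeq A B L ∧ L.prod = gs.prod * l.prod * gs.prod⁻¹ ∧
      2 ≤ L.length ∧
      ∃ x y, L.head? = some x ∧ L.getLast? = some y ∧ ¬ DiffFactors A B x y := by
  intro gs
  induction gs using List.reverseRecOn with
  | nil =>
    intro _ l hl h2 hends _
    exact ⟨l, hl, by simp, h2, hends⟩
  | append_singleton gs' b ih =>
    intro hgs l hl h2 hends hinv
    rcases reduced_concat_iff.1 hgs with ⟨hb, hgs', hdg⟩
    rcases hends with ⟨x, y, hhx, hly, hnd⟩
    rcases l with _ | ⟨x1, t⟩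
    · simp at hhx
    obtain rfl : x = x1 := by symm; simpa using hhx
    have hyl : Ltr A B y := hl.1 y (List.mem_of_mem_getLast? hly)
    have hdbx : DiffFactors A B b x := hinv b (by rw [List.getLast?_concat]; rfl) x rfl
    have hdby : DiffFactors A B b y := diff_of_diff_not_diff hyl hdbx hnd
    have hl2 : ReducedSeq A B ((b :: x :: t) ++ [b⁻¹]) := by
      refine reduced_concat_iff.2 ⟨ltr_inv hb, ?_, ?_⟩
      · refine reduced_cons_iff.2 ⟨hb, hl, ?_⟩
        intro v hv
        simp only [List.head?_cons, Option.mem_def, Option.some.injEq] at hv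
        subst hv
        exact hdbx
      · intro u hu
        rw [List.getLast?_cons_cons, hly] at hu
        simp only [Option.mem_def, Option.some.injEq] at hu
        subst hu
        exact diff_inv_right (diff_symm hdby)
    have hndb : ¬ DiffFactors A B b b⁻¹ := by
      rcases hb.1 with h | h
      · exact not_diff_of_memA h (inv_mem h)
      · exact not_diff_of_memB h (inv_mem h)
    have hinv' : ∀ c ∈ gs'.getLast?, ∀ u ∈ ((b :: x :: t) ++ [b⁻¹]).head?,
        DiffFactors A B c u := by
      intro c hc u hu
      rw [List.cons_append] at hu
      simp only [List.head?_cons, Option.mem_def, Option.some.injEq] at hu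
      subst hu
      exact hdg c hc
    obtain ⟨L, hL, hLp, hLlen, hLends⟩ := ih hgs' ((b :: x :: t) ++ [b⁻¹]) hl2
      (by simp) ⟨b, b⁻¹, by rw [List.cons_append]; rfl, List.getLast?_concat, hndb⟩ hinv'
    refine ⟨L, hL, ?_, hLlen, hLends⟩
    rw [hLp]
    simp only [List.prod_append, List.prod_cons, List.prod_nil, mul_one]
    group

lemma core (hAB : IsAmalgam A B) : ∀ gs : List Γ, ReducedSeq A B gs → ∀ γ n,
    CRLen A B γ n → AmCyclicallyReduced A B (gs.prod * γ * gs.prod⁻¹) →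
    CRLen A B (gs.prod * γ * gs.prod⁻¹) n := by
  intro gs
  induction gs using List.reverseRecOn with
  | nil =>
    intro _ γ n h _
    simpa using h
  | append_singleton gs' a ih =>
    intro hgs γ n hγ hcr
    rcases reduced_concat_iff.1 hgs with ⟨ha, hgs', hdg⟩
    have heq : (gs' ++ [a]).prod * γ * (gs' ++ [a]).prod⁻¹
        = gs'.prod * (a * γ * a⁻¹) * gs'.prod⁻¹ := by
      simp only [List.prod_append, List.prod_cons, List.prod_nil, mul_one]
      group
    rcases step_conj hγ ha with hgood | ⟨L0, hL0, hL0p, hL0len, x, y, hhx, hly, hnd, hax⟩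
    · rw [heq] at hcr ⊢
      exact ih hgs' _ n hgood hcr
    · exfalso
      have hinv : ∀ b ∈ gs'.getLast?, ∀ u ∈ L0.head?, DiffFactors A B b u := by
        intro b hb u hu
        rw [hhx] at hu
        obtain rfl : x = u := by simpa using hu
        exact diff_of_diff_not_diff (hL0.1 x (List.mem_of_mem_head? hhx)) (hdg b hb) hax
      obtain ⟨L, hL, hLp, hLlen, u, v, hu, hv, hnduv⟩ :=
        persist gs' hgs' L0 hL0 hL0len ⟨x, y, hhx, hly, hnd⟩ hinv
      have hLp' : L.prod = (gs' ++ [a]).prod * γ * (gs' ++ [a]).prod⁻¹ := by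
        rw [hLp, hL0p, heq]
      rcases hcr with hfac | ⟨l'', hl'', hp'', hlen'', x'', y'', hx'', hy'', hd''⟩
      · have hle := length_le_one_of_prod_mem hAB hL (by rw [hLp']; exact hfac)
        omega
      · have h1 := heads_not_diff hAB hL hl'' (by rw [hLp']; exact hp''.symm) hu hx''
        have h2 := lasts_not_diff hAB hL hl'' (by rw [hLp']; exact hp''.symm) hv hy''
        have hul : Ltr A B u := hL.1 u (List.mem_of_mem_head? hu)
        have hvl : Ltr A B v := hL.1 v (List.mem_of_mem_getLast? hv)
        exact not_diff_trans hul (not_diff_symm h1) (not_diff_trans hvl hnduv h2) hd''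

/-- conjugation by an element of C preserves cyclically-reduced-with-length. -/
lemma conjC {c : Γ} (hcA : c ∈ A) (hcB : c ∈ B) {γ : Γ} {n : ℕ} (h : CRLen A B γ n) :
    CRLen A B (c * γ * c⁻¹) n := by
  rcases h with ⟨rfl, hgf⟩ | ⟨l, hl, hlp, hlen, h2n, x0, y0, hh0, hl0, hdxy0⟩
  · left
    refine ⟨rfl, ?_⟩
    rcases hgf with h | h
    · exact Or.inl (mul_mem (mul_mem hcA h) (inv_mem hcA))
    · exact Or.inr (mul_mem (mul_mem hcB h) (inv_mem hcB))
  · right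
    rcases l with _ | ⟨x, t⟩
    · simp at hh0
    rcases List.eq_nil_or_concat t with rfl | ⟨m, y, rfl⟩
    · simp at hlen
      omega
    simp only [List.concat_eq_append] at hl hlp hlen hl0
    have hx0 : x = x0 := by simpa using hh0
    have hy0 : y = y0 := by
      rw [← List.cons_append, List.getLast?_concat] at hl0
      simpa using hl0
    subst hx0; subst hy0
    have hl2 : ReducedSeq A B ((x :: m) ++ [y]) := by rw [List.cons_append]; exact hl
    have hstep1 : ReducedSeq A B ((x :: m) ++ [y * c⁻¹]) :=
      reduced_modLast (inv_mem hcA) (inv_mem hcB) hl2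
    have hstep1' : ReducedSeq A B (x :: (m ++ [y * c⁻¹])) := by
      rw [← List.cons_append]; exact hstep1
    have hstep2 : ReducedSeq A B ((c * x) :: (m ++ [y * c⁻¹])) :=
      reduced_modHead hcA hcB hstep1'
    refine ⟨(c * x) :: (m ++ [y * c⁻¹]), hstep2, ?_, by simpa using hlen, h2n,
      c * x, y * c⁻¹, rfl, ?_, ?_⟩
    · rw [← hlp]
      simp only [List.prod_append, List.prod_cons, List.prod_nil, mul_one]
      group
    · rw [← List.cons_append, List.getLast?_concat]
    · refine diff_congr (mul_mem_cancel_left hcA).symm (mul_mem_cancel_left hcB).symm ?_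
      exact diff_congr' (mul_mem_cancel_right (inv_mem hcA)).symm
        (mul_mem_cancel_right (inv_mem hcB)).symm hdxy0

end AmAux

/-- Two conjugate cyclically reduced elements of an amalgam have the same
length. -/
theorem amalgam_conj_cyclicallyReduced_length_eq (A B : Subgroup Γ)
    (hAB : IsAmalgam A B) (γ γ' : Γ)
    (hγ : AmCyclicallyReduced A B γ) (hγ' : AmCyclicallyReduced A B γ')
    (hconj : ∃ g : Γ, γ' = g * γ * g⁻¹)
    (n n' : ℕ) (hn : AmLength A B γ n) (hn' : AmLength A B γ' n') :
    n = n' := by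
  obtain ⟨g, rfl⟩ := hconj
  have hcr : AmAux.CRLen A B γ n := by
    rcases hγ with hfac | ⟨l, hl, hp, h2, x, y, hhx, hly, hd⟩
    · exact Or.inl ⟨AmAux.amLength_unique hAB hn (Or.inl ⟨rfl, hfac⟩), hfac⟩
    · have hne : l ≠ [] := by intro h; rw [h] at h2; simp at h2
      have hlth : l.length = n :=
        AmAux.amLength_unique hAB (Or.inr ⟨l, hne, hl, hp, rfl⟩) hn
      exact Or.inr ⟨l, hl, hp, hlth, hlth ▸ h2, x, y, hhx, hly, hd⟩
  rcases AmAux.exists_form hAB g with ⟨hgA, hgB⟩ | ⟨gs, hgs, rfl⟩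
  · exact AmAux.amLength_unique hAB
      (AmAux.crlen_amLength (AmAux.conjC hgA hgB hcr)) hn'
  · exact AmAux.amLength_unique hAB
      (AmAux.crlen_amLength (AmAux.core hAB gs hgs γ n hcr hγ')) hn'
end

section
/- Let Γ = A*_φ and let γ ∈ Γ be cyclically reduced. If γ = h c h^{-1} for some c ∈ C_{+1} ∪ C_{-1} and some h ∈ Γ with reduced form h = h_1 t^{ε_1} h_2 ⋯ t^{ε_p} h_{p+1}, then γ ∈ A, and there exists a finite sequence (c_0, c_1, …, c_{2p}) of elements of C_{+1} ∪ C_{-1} such that c_{2p} = c, γ = h_1 c_0 h_1^{-1}, and for all i = 0, …, p−1: c_{2i+1} = h_{i+2} c_{2i+2} h_{i+2}^{-1} and c_{2i} = t^{ε_{i+1}} c_{2i+1} t^{-ε_{i+1}}. -/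
/-!
Internal characterization of the HNN extension `Γ = A*_φ`:
`A` is a subgroup of `Γ`, `t ∈ Γ` is the stable letter, `Cm = C_{-1}` and
`Cp = C_{+1}` are subgroups of `A` with `t⁻¹ Cm t = Cp` (so
`φ(c) = t⁻¹ c t` for `c ∈ Cm`), `A ∪ {t}` generates `Γ`, and Britton's lemma
holds: a reduced word `g₀ t^{ε₁} g₁ ⋯ t^{εₙ} gₙ` with `n ≥ 1` is nontrivial.
-/

variable {Γ : Type*} [Group Γ]

/-- The subgroup `C_ε` : `C_{+1} = Cp` when `ε = 1`, and `C_{-1} = Cm`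
otherwise. -/
def toCsub (Cm Cp : Subgroup Γ) (ε : ℤ) : Subgroup Γ := if ε = 1 then Cp else Cm

/-- The pair `(g₀, [(ε₁, g₁), …, (εₙ, gₙ)])` encodes the word
`g₀ t^{ε₁} g₁ ⋯ t^{εₙ} gₙ`; it is reduced when all `gᵢ ∈ A`, all `εᵢ = ±1`,
and it contains no pinch `t^{εᵢ} gᵢ t^{-εᵢ}` with `gᵢ ∈ C_{εᵢ}`. -/
def HNNReducedWord (A Cm Cp : Subgroup Γ) (g₀ : Γ) (w : List (ℤ × Γ)) : Prop :=
  g₀ ∈ A ∧ (∀ p ∈ w, (p.1 = 1 ∨ p.1 = -1) ∧ p.2 ∈ A) ∧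
    w.Chain' fun p q => q.1 = -p.1 → p.2 ∉ toCsub Cm Cp p.1

/-- The element of `Γ` represented by the word
`g₀ t^{ε₁} g₁ ⋯ t^{εₙ} gₙ`. -/
def hnnProd (t g₀ : Γ) (w : List (ℤ × Γ)) : Γ :=
  g₀ * (w.map fun p => t ^ p.1 * p.2).prod

/-- `Γ` is the HNN extension of its subgroup `A` relative to the isomorphism
`φ : Cm → Cp`, `φ(c) = t⁻¹ c t`, with stable letter `t`. -/
def IsHNN (A Cm Cp : Subgroup Γ) (t : Γ) : Prop :=
  Cm ≤ A ∧ Cp ≤ A ∧ (∀ c : Γ, c ∈ Cm ↔ t⁻¹ * c * t ∈ Cp) ∧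
    Subgroup.closure ((A : Set Γ) ∪ {t}) = ⊤ ∧
    ∀ g₀ w, HNNReducedWord A Cm Cp g₀ w → w ≠ [] → hnnProd t g₀ w ≠ 1

/-- `g` is cyclically reduced: `g ∈ A` (length 1), or `g` has a reduced form
`g₁ t^{ε₁} g₂ ⋯ gₙ t^{εₙ} gₙ₊₁` with `gₙ₊₁ = 1` and either `n = 1` or
`t^{εₙ} g₁ t^{ε₁}` is not a pinch. -/
def HNNCyclicallyReduced (A Cm Cp : Subgroup Γ) (t g : Γ) : Prop :=
  g ∈ A ∨
    ∃ g₀ w, HNNReducedWord A Cm Cp g₀ w ∧ hnnProd t g₀ w = g ∧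
      ∃ p q, w.head? = some q ∧ w.getLast? = some p ∧ p.2 = 1 ∧
        (w.length = 1 ∨ ¬(q.1 = -p.1 ∧ g₀ ∈ toCsub Cm Cp p.1))

namespace HNNProofAux

variable {Γ : Type*} [Group Γ]

/-- The pinch-freeness relation. -/
def P (Cm Cp : Subgroup Γ) (p q : ℤ × Γ) : Prop :=
  q.1 = -p.1 → p.2 ∉ toCsub Cm Cp p.1

lemma reduced_def (A Cm Cp : Subgroup Γ) (g₀ : Γ) (w : List (ℤ × Γ)) :
    HNNReducedWord A Cm Cp g₀ w ↔
      g₀ ∈ A ∧ (∀ p ∈ w, (p.1 = 1 ∨ p.1 = -1) ∧ p.2 ∈ A) ∧ w.Chain' (P Cm Cp) :=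
  Iff.rfl

lemma hnnProd_nil (t a : Γ) : hnnProd t a [] = a := by simp [hnnProd]

lemma hnnProd_cons' (t a : Γ) (e : ℤ) (g : Γ) (u : List (ℤ × Γ)) :
    hnnProd t a ((e, g) :: u) = a * t ^ e * hnnProd t g u := by
  simp [hnnProd, mul_assoc]

lemma hnnProd_append (t a : Γ) (u v : List (ℤ × Γ)) :
    hnnProd t a (u ++ v) = hnnProd t a u * hnnProd t 1 v := by
  simp [hnnProd, mul_assoc]

lemma hnnProd_concat (t a : Γ) (u : List (ℤ × Γ)) (e : ℤ) (g : Γ) :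
    hnnProd t a (u ++ [(e, g)]) = hnnProd t a u * t ^ e * g := by
  simp [hnnProd, mul_assoc]

lemma hnnProd_mul_left (t a x : Γ) (u : List (ℤ × Γ)) :
    hnnProd t (x * a) u = x * hnnProd t a u := by
  simp [hnnProd, mul_assoc]

/-- The inverse word. -/
def invWord : Γ → List (ℤ × Γ) → Γ × List (ℤ × Γ)
  | a, [] => (a⁻¹, [])
  | a, (e, g) :: u => ((invWord g u).1, (invWord g u).2 ++ [(-e, a⁻¹)])

lemma invWord_prod (t : Γ) : ∀ (u : List (ℤ × Γ)) (a : Γ),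
    hnnProd t (invWord a u).1 (invWord a u).2 = (hnnProd t a u)⁻¹
  | [], a => by simp [invWord, hnnProd]
  | (e, g) :: u, a => by
    rw [invWord, hnnProd_concat, invWord_prod t u g, hnnProd_cons']
    group

lemma invWord_length : ∀ (u : List (ℤ × Γ)) (a : Γ),
    (invWord a u).2.length = u.length
  | [], a => rfl
  | (e, g) :: u, a => by
    simp [invWord, invWord_length u g]

lemma invWord_fst_mem (A : Subgroup Γ) : ∀ (u : List (ℤ × Γ)) (a : Γ), a ∈ A →
    (∀ p ∈ u, p.2 ∈ A) → (invWord a u).1 ∈ A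
  | [], a, ha, _ => by simpa [invWord] using inv_mem ha
  | (e, g) :: u, a, ha, hu => by
    rw [invWord]
    exact invWord_fst_mem A u g (hu (e, g) (by simp)) fun p hp => hu p (by simp [hp])

lemma invWord_snd_mem (A : Subgroup Γ) : ∀ (u : List (ℤ × Γ)) (a : Γ), a ∈ A →
    (∀ p ∈ u, (p.1 = 1 ∨ p.1 = -1) ∧ p.2 ∈ A) →
    ∀ p ∈ (invWord a u).2, (p.1 = 1 ∨ p.1 = -1) ∧ p.2 ∈ A
  | [], a, ha, _ => by simp [invWord]
  | (e, g) :: u, a, ha, hu => by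
    rw [invWord]
    intro p hp
    rcases List.mem_append.1 hp with hp | hp
    · exact invWord_snd_mem A u g ((hu (e, g) (by simp)).2)
        (fun p hp => hu p (by simp [hp])) p hp
    · rcases List.mem_singleton.1 hp with rfl
      refine ⟨?_, inv_mem ha⟩
      have := (hu (e, g) (by simp)).1
      simp only at this
      omega

lemma invWord_fst_eq : ∀ (u : List (ℤ × Γ)) (a : Γ) (pr : ℤ × Γ),
    u.getLast? = some pr → (invWord a u).1 = pr.2⁻¹
  | [], a, pr, h => by simp at h
  | [(e, g)], a, pr, h => by
    simp at h
    rw [invWord, invWord]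
    simp [← h]
  | (e, g) :: (e', g') :: u, a, pr, h => by
    rw [invWord]
    exact invWord_fst_eq ((e', g') :: u) g pr (by simpa using h)

lemma invWord_head : ∀ (u : List (ℤ × Γ)) (a : Γ) (pr : ℤ × Γ),
    u.getLast? = some pr → ∃ z, (invWord a u).2.head? = some (-pr.1, z)
  | [], a, pr, h => by simp at h
  | [(e, g)], a, pr, h => by
    simp at h
    rw [invWord, invWord]
    exact ⟨a⁻¹, by simp [← h]⟩
  | (e, g) :: (e', g') :: u, a, pr, h => by
    rw [invWord]
    obtain ⟨z, hz⟩ := invWord_head ((e', g') :: u) g pr (by simpa using h)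
    refine ⟨z, ?_⟩
    rw [List.head?_append_of_ne_nil, hz]
    intro hnil
    have := invWord_length ((e', g') :: u) g
    rw [hnil] at this
    simp at this

lemma invWord_chain (Cm Cp : Subgroup Γ) : ∀ (u : List (ℤ × Γ)) (a : Γ),
    u.Chain' (P Cm Cp) → (invWord a u).2.Chain' (P Cm Cp)
  | [], a, _ => by simp [invWord, List.Chain']
  | (e, g) :: u, a, hch => by
    rw [invWord]
    simp only [List.Chain']; rw [List.isChain_append]
    refine ⟨invWord_chain Cm Cp u g hch.tail, by simp, ?_⟩
    intro x hx y hy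
    rcases u with _ | ⟨⟨e', g'⟩, u'⟩
    · simp [invWord] at hx
    · rw [invWord, List.getLast?_concat, Option.mem_some_iff] at hx
      subst hx
      simp only [Option.mem_some_iff, List.head?_cons] at hy
      subst hy
      intro h1 h2
      have hrel := List.isChain_cons_cons.1 hch |>.1
      have he' : e' = -e := by omega
      have : g ∈ toCsub Cm Cp e := by
        have : toCsub Cm Cp (-e') = toCsub Cm Cp e := by rw [he', neg_neg]
        rw [← this]
        simpa using (inv_mem_iff (x := g)).1 h2
      exact hrel he' this

lemma invWord_snd_getLast (a : Γ) (e : ℤ) (g : Γ) (u : List (ℤ × Γ)) :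
    (invWord a ((e, g) :: u)).2.getLast? = some (-e, a⁻¹) := by
  rw [invWord, List.getLast?_concat]

end HNNProofAux
namespace HNNProofAux

variable {Γ : Type*} [Group Γ]

lemma toCsub_le (A Cm Cp : Subgroup Γ) (t : Γ) (hH : IsHNN A Cm Cp t) (e : ℤ) :
    toCsub Cm Cp e ≤ A := by
  unfold toCsub; split
  · exact hH.2.1
  · exact hH.1

lemma toCsub_subset_union (Cm Cp : Subgroup Γ) (e : ℤ) {x : Γ}
    (hx : x ∈ toCsub Cm Cp e) : x ∈ (Cp : Set Γ) ∪ (Cm : Set Γ) := by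
  unfold toCsub at hx
  split at hx
  · exact Or.inl hx
  · exact Or.inr hx

lemma union_mem_A (A Cm Cp : Subgroup Γ) (t : Γ) (hH : IsHNN A Cm Cp t) {x : Γ}
    (hx : x ∈ (Cp : Set Γ) ∪ (Cm : Set Γ)) : x ∈ A := by
  rcases hx with hx | hx
  · exact hH.2.1 hx
  · exact hH.1 hx

lemma conj_mem_toCsub (A Cm Cp : Subgroup Γ) (t : Γ) (hH : IsHNN A Cm Cp t)
    {e : ℤ} (he : e = 1 ∨ e = -1) {x : Γ} (hx : x ∈ toCsub Cm Cp e) :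
    t ^ e * x * t ^ (-e) ∈ toCsub Cm Cp (-e) := by
  rcases he with rfl | rfl
  · rw [show toCsub Cm Cp 1 = Cp from if_pos rfl] at hx
    rw [show toCsub Cm Cp (-1 : ℤ) = Cm from if_neg (by decide)]
    rw [zpow_one, zpow_neg_one, hH.2.2.1,
      show t⁻¹ * (t * x * t⁻¹) * t = x by group]
    exact hx
  · rw [show toCsub Cm Cp (-1 : ℤ) = Cm from if_neg (by decide)] at hx
    rw [show -(-1 : ℤ) = 1 from by norm_num,
      show toCsub Cm Cp 1 = Cp from if_pos rfl, zpow_one, zpow_neg_one]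
    exact (hH.2.2.1 x).1 hx

lemma britton_not_chain (A Cm Cp : Subgroup Γ) (t : Γ) (hH : IsHNN A Cm Cp t)
    {a : Γ} {u : List (ℤ × Γ)} (ha : a ∈ A)
    (hent : ∀ p ∈ u, (p.1 = 1 ∨ p.1 = -1) ∧ p.2 ∈ A) (hne : u ≠ [])
    (hprod : hnnProd t a u = 1) : ¬ u.Chain' (P Cm Cp) := fun hch =>
  hH.2.2.2.2 a u ⟨ha, hent, hch⟩ hne hprod

/-- Changing the group element of the last letter does not affect
pinch-freeness w.r.t. earlier letters. -/
lemma chain'_concat_replace (Cm Cp : Subgroup Γ) {l : List (ℤ × Γ)} {f : ℤ}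
    {x y : Γ} (h : (l ++ [(f, x)]).Chain' (P Cm Cp)) :
    (l ++ [(f, y)]).Chain' (P Cm Cp) := by
  simp only [List.Chain'] at h ⊢; rw [List.isChain_append] at h ⊢
  refine ⟨h.1, by simp, ?_⟩
  intro p hp q hq
  simp only [List.head?_cons, Option.mem_some_iff] at hq
  subst hq
  exact fun h1 => h.2.2 p hp (f, x) (by simp) h1

end HNNProofAux
namespace HNNProofAux

variable {Γ : Type*} [Group Γ]

lemma L_head_last_aux (a : Γ) (e : ℤ) (c' : Γ) :
    ∀ u : List (ℤ × Γ), ∃ f z,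
      (u ++ ([(e, c'), (-e, (invWord a u).1)] ++ (invWord a u).2)).head? = some (f, z) ∧
      (u ++ ([(e, c'), (-e, (invWord a u).1)] ++ (invWord a u).2)).getLast? = some (-f, a⁻¹)
  | [] => ⟨e, c', by simp [invWord], by simp [invWord]⟩
  | (ue, ug) :: u₂ => by
    refine ⟨ue, ug, by simp, ?_⟩
    rw [show ((ue, ug) :: u₂) ++
        ([(e, c'), (-e, (invWord a ((ue, ug) :: u₂)).1)] ++ (invWord a ((ue, ug) :: u₂)).2)
        = (((ue, ug) :: u₂) ++ [(e, c'), (-e, (invWord a ((ue, ug) :: u₂)).1)]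
            ++ (invWord ug u₂).2) ++ [(-ue, a⁻¹)] by simp [invWord]]
    rw [List.getLast?_concat]

lemma L_head_last (a : Γ) (e : ℤ) (c' : Γ) (u : List (ℤ × Γ)) (b : Γ)
    (v : List (ℤ × Γ)) (hb : b = (invWord a u).1) (hv : v = (invWord a u).2) :
    ∃ f z, (u ++ ([(e, c'), (-e, b)] ++ v)).head? = some (f, z) ∧
      (u ++ ([(e, c'), (-e, b)] ++ v)).getLast? = some (-f, a⁻¹) := by
  subst hb; subst hv; exact L_head_last_aux a e c' u

end HNNProofAux
namespace HNNProofAux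

variable {Γ : Type*} [Group Γ]

lemma crux (A Cm Cp : Subgroup Γ) (t : Γ) (hH : IsHNN A Cm Cp t) (γ : Γ)
    (hcyc : HNNCyclicallyReduced A Cm Cp t γ)
    (a : Γ) (u : List (ℤ × Γ)) (e : ℤ) (g c' : Γ)
    (hred : HNNReducedWord A Cm Cp a (u ++ [(e, g)]))
    (hc'A : c' ∈ A)
    (hγ : γ = hnnProd t a u * t ^ e * c' * t ^ (-e) * (hnnProd t a u)⁻¹) :
    c' ∈ toCsub Cm Cp e := by
  by_contra hc
  obtain ⟨haA, hent, hch⟩ := hred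
  have hentu : ∀ p ∈ u, (p.1 = 1 ∨ p.1 = -1) ∧ p.2 ∈ A := fun p hp =>
    hent p (List.mem_append_left _ hp)
  have heg := hent (e, g) (List.mem_append_right _ (by simp))
  have he : e = 1 ∨ e = -1 := heg.1
  have hchu : u.Chain' (P Cm Cp) := (List.isChain_append.1 hch).1
  have hjunc : ∀ x ∈ u.getLast?, P Cm Cp x (e, g) := fun x hx =>
    (List.isChain_append.1 hch).2.2 x hx (e, g) (by simp)
  set b := (invWord a u).1 with hbdef
  set v := (invWord a u).2 with hvdef
  set L : List (ℤ × Γ) := u ++ ([(e, c'), (-e, b)] ++ v) with hLdef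
  have hLne : L ≠ [] := by simp [hLdef]
  have hvprod : hnnProd t b v = (hnnProd t a u)⁻¹ := invWord_prod t u a
  have hLprod : hnnProd t a L = γ := by
    rw [hLdef, hnnProd_append,
      show [(e, c'), (-e, b)] ++ v = (e, c') :: ((-e, b) :: v) from rfl,
      hnnProd_cons', hnnProd_cons', hvprod, hγ]
    group
  have hentL : ∀ p ∈ L, (p.1 = 1 ∨ p.1 = -1) ∧ p.2 ∈ A := by
    intro p hp
    rw [hLdef] at hp
    rcases List.mem_append.1 hp with hp | hp
    · exact hentu p hp
    · rcases List.mem_append.1 hp with hp | hp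
      · rcases List.mem_cons.1 hp with rfl | hp
        · exact ⟨he, hc'A⟩
        · rcases List.mem_singleton.1 hp with rfl
          refine ⟨by omega, invWord_fst_mem A u a haA fun p hp => (hentu p hp).2⟩
      · exact invWord_snd_mem A u a haA hentu p hp
  have hchL : L.Chain' (P Cm Cp) := by
    rw [hLdef]; simp only [List.Chain']; rw [List.isChain_append]
    refine ⟨hchu, ?_, ?_⟩
    · rw [List.isChain_append]
      refine ⟨?_, invWord_chain Cm Cp u a hchu, ?_⟩
      · refine List.isChain_cons_cons.2 ⟨fun _ => hc, by simp⟩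
      · intro x hx y hy
        simp only [List.getLast?_cons_cons, List.getLast?_singleton,
          Option.mem_some_iff] at hx
        subst hx
        have hune : u ≠ [] := by
          rintro rfl
          rw [hvdef] at hy
          simp [invWord] at hy
        obtain ⟨pr, hpru⟩ : ∃ pr, u.getLast? = some pr := by
          cases hul : u.getLast? with
          | none => exact absurd (List.getLast?_eq_none_iff.1 hul) hune
          | some pr => exact ⟨pr, rfl⟩
        obtain ⟨zz, hzz⟩ := invWord_head u a pr hpru
        rw [hvdef] at hy
        rw [hzz, Option.mem_some_iff] at hy
        subst hy
        intro h1 h2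
        have hpr1 : e = -pr.1 := by simp only at h1; omega
        have hb : b = pr.2⁻¹ := hbdef.trans (invWord_fst_eq u a pr hpru)
        refine hjunc pr hpru hpr1 (inv_mem_iff.1 ?_)
        have h2' : b ∈ toCsub Cm Cp (-e) := h2
        rw [hb, hpr1, neg_neg] at h2'
        exact h2'
    · intro x hx y hy
      have hy' : y = (e, c') := by
        rw [show ([(e, c'), (-e, b)] ++ v).head? = some (e, c') from rfl,
          Option.mem_some_iff] at hy
        exact hy.symm
      subst hy'
      exact fun h1 => hjunc x hx h1
  -- the case where γ lies in A
  rcases hcyc with hγA | ⟨g₀', w', hred', hprod', pr, q, hq, hpr, hpr2, hdisj⟩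
  · have h1 : hnnProd t (γ⁻¹ * a) L = 1 := by
      rw [hnnProd_mul_left, hLprod, inv_mul_cancel]
    exact britton_not_chain A Cm Cp t hH (mul_mem (inv_mem hγA) haA) hentL hLne h1 hchL
  -- γ has a cyclically reduced word of positive length
  obtain ⟨hg₀A, hent', hch'⟩ := hred'
  -- decompose w' as q :: w't
  obtain ⟨w't, rfl⟩ : ∃ w't, w' = q :: w't := by
    cases w' with
    | nil => simp at hq
    | cons q₀ w't =>
      rw [List.head?_cons] at hq
      exact ⟨w't, by rw [(Option.some_injective _ hq.symm)]⟩
  obtain ⟨qe, qg⟩ := q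
  have hv'fst : (invWord g₀' ((qe, qg) :: w't)).1 = 1 := by
    rw [invWord_fst_eq ((qe, qg) :: w't) g₀' pr hpr, hpr2, inv_one]
  have hγinv : hnnProd t 1 (invWord g₀' ((qe, qg) :: w't)).2 = γ⁻¹ := by
    rw [← hv'fst, invWord_prod, hprod']
  set v'₀ := (invWord qg w't).2 with hv'₀def
  have hv'eq : (invWord g₀' ((qe, qg) :: w't)).2 = v'₀ ++ [(-qe, g₀'⁻¹)] := by
    rw [invWord]
  have hchv' : ((invWord g₀' ((qe, qg) :: w't)).2).Chain' (P Cm Cp) :=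
    invWord_chain Cm Cp _ g₀' hch'
  have hentv' : ∀ p ∈ (invWord g₀' ((qe, qg) :: w't)).2,
      (p.1 = 1 ∨ p.1 = -1) ∧ p.2 ∈ A :=
    invWord_snd_mem A _ g₀' hg₀A hent'
  have hqe : qe = 1 ∨ qe = -1 := (hent' (qe, qg) (by simp)).1
  obtain ⟨f, z, hLhead, hLlast⟩ := L_head_last a e c' u b v hbdef hvdef
  rw [← hLdef] at hLhead hLlast
  -- the word W = v'₀ ++ [(-qe, g₀'⁻¹ * a)] ++ L represents 1
  have hprodW : hnnProd t 1 (v'₀ ++ [(-qe, g₀'⁻¹ * a)] ++ L) = 1 := by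
    rw [hnnProd_append, hnnProd_concat]
    have h2 : hnnProd t 1 L = a⁻¹ * γ := by
      rw [← hLprod, ← hnnProd_mul_left, inv_mul_cancel]
    have h3 : hnnProd t 1 v'₀ * t ^ (-qe) * g₀'⁻¹ = γ⁻¹ := by
      rw [← hγinv, hv'eq, hnnProd_concat]
    rw [h2, show hnnProd t 1 v'₀ * t ^ (-qe) * (g₀'⁻¹ * a)
        = (hnnProd t 1 v'₀ * t ^ (-qe) * g₀'⁻¹) * a from by group, h3]
    group
  have hentW : ∀ p ∈ v'₀ ++ [(-qe, g₀'⁻¹ * a)] ++ L,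
      (p.1 = 1 ∨ p.1 = -1) ∧ p.2 ∈ A := by
    intro p hp
    rcases List.mem_append.1 hp with hp | hp
    · rcases List.mem_append.1 hp with hp | hp
      · exact hentv' p (by rw [hv'eq]; exact List.mem_append_left _ hp)
      · rcases List.mem_singleton.1 hp with rfl
        exact ⟨by omega, mul_mem (inv_mem hg₀A) haA⟩
    · exact hentL p hp
  have hnotchW := britton_not_chain A Cm Cp t hH (one_mem A) hentW (by simp [hLdef])
    hprodW
  -- extract the junction pinch of W
  have hWpinch : f = qe ∧ g₀'⁻¹ * a ∈ toCsub Cm Cp (-qe) := by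
    by_contra hcon
    refine hnotchW ?_
    simp only [List.Chain']; rw [List.isChain_append]
    refine ⟨chain'_concat_replace Cm Cp (hv'eq ▸ hchv'), hchL, ?_⟩
    intro x hx y hy
    rw [List.getLast?_concat, Option.mem_some_iff] at hx
    subst hx
    rw [hLhead, Option.mem_some_iff] at hy
    subst hy
    intro h1 h2
    exact hcon ⟨by simp only at h1; omega, h2⟩
  -- the word W2 = L ++ v' represents 1
  have hprodW2 : hnnProd t a (L ++ (invWord g₀' ((qe, qg) :: w't)).2) = 1 := by
    rw [hnnProd_append, hLprod, hγinv, mul_inv_cancel]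
  have hnotchW2 := britton_not_chain A Cm Cp t hH haA
    (fun p hp => (List.mem_append.1 hp).elim (hentL p) (hentv' p))
    (by simp [hLdef]) hprodW2
  have hW2pinch : pr.1 = -f ∧ a⁻¹ ∈ toCsub Cm Cp (-f) := by
    by_contra hcon
    refine hnotchW2 ?_
    simp only [List.Chain']; rw [List.isChain_append]
    refine ⟨hchL, hchv', ?_⟩
    intro x hx y hy
    rw [hLlast, Option.mem_some_iff] at hx
    subst hx
    obtain ⟨zz, hzz⟩ := invWord_head ((qe, qg) :: w't) g₀' pr hpr
    rw [hzz, Option.mem_some_iff] at hy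
    subst hy
    intro h1 h2
    exact hcon ⟨by simp only at h1 ⊢; omega, h2⟩
  obtain ⟨hf, hX⟩ := hWpinch
  obtain ⟨hprf, hainv⟩ := hW2pinch
  rcases hdisj with hlen | hdisj
  · -- w' has length one : remove the single junction pinch and contradict Britton
    have hw't : w't = [] := by
      simp only [List.length_cons] at hlen
      exact List.length_eq_zero_iff.1 (by omega)
    subst hw't
    have hv'₀nil : v'₀ = [] := rfl
    obtain ⟨Ltail, hLcons⟩ : ∃ ltl, L = (f, z) :: ltl := by
      rcases hL2 : L with _ | ⟨y, tl⟩
      · rw [hL2] at hLhead; simp at hLhead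
      · rw [hL2, List.head?_cons, Option.some_inj] at hLhead
        exact ⟨tl, by rw [hLhead]⟩
    have hzA : z ∈ A := (hentL (f, z) (by rw [hLcons]; simp)).2
    have hk : t ^ (-qe) * (g₀'⁻¹ * a) * t ^ qe ∈ toCsub Cm Cp qe := by
      have := conj_mem_toCsub A Cm Cp t hH (e := -qe) (by omega) hX
      rwa [neg_neg] at this
    have hk1 : hnnProd t ((t ^ (-qe) * (g₀'⁻¹ * a) * t ^ qe) * z) Ltail = 1 := by
      have h5 := hprodW
      rw [hv'₀nil, List.nil_append, hLcons,
        show [(-qe, g₀'⁻¹ * a)] ++ ((f, z) :: Ltail)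
          = (-qe, g₀'⁻¹ * a) :: ((f, z) :: Ltail) from rfl,
        hnnProd_cons', hnnProd_cons', hf] at h5
      rw [hnnProd_mul_left, ← h5]
      group
    have hLtailne : Ltail ≠ [] := by
      have hlenL : L.length = u.length + 2 + u.length := by
        rw [hLdef]
        simp only [List.length_append, List.length_cons, List.length_nil,
          hvdef, invWord_length]
        omega
      rw [hLcons] at hlenL
      simp only [List.length_cons] at hlenL
      intro hnil
      rw [hnil] at hlenL
      simp at hlenL
      omega
    refine britton_not_chain A Cm Cp t hH
      (mul_mem (toCsub_le A Cm Cp t hH qe hk) hzA)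
      (fun p hp => hentL p (by rw [hLcons]; exact List.mem_cons_of_mem _ hp))
      hLtailne hk1 ?_
    have := hLcons ▸ hchL
    exact this.tail
  · -- w' has length at least two : contradict cyclical reducedness
    refine hdisj ⟨by simp only at hprf ⊢; omega, ?_⟩
    have haC : a ∈ toCsub Cm Cp (-qe) := by
      rw [hf] at hainv
      exact (inv_mem_iff (x := a)).1 hainv
    have : a * (g₀'⁻¹ * a)⁻¹ ∈ toCsub Cm Cp (-qe) := mul_mem haC (inv_mem hX)
    rw [show a * (g₀'⁻¹ * a)⁻¹ = g₀' from by group] at this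
    rw [show pr.1 = -qe from by omega]
    exact this

end HNNProofAux
namespace HNNProofAux

variable {Γ : Type*} [Group Γ]

lemma main_aux (A Cm Cp : Subgroup Γ) (t : Γ) (hH : IsHNN A Cm Cp t) (γ : Γ)
    (hcyc : HNNCyclicallyReduced A Cm Cp t γ) (u : List (ℤ × Γ)) :
    ∀ a co : Γ, HNNReducedWord A Cm Cp a u → co ∈ (Cp : Set Γ) ∪ (Cm : Set Γ) →
    γ = hnnProd t a u * co * (hnnProd t a u)⁻¹ →
    γ ∈ A ∧ ∃ c : ℕ → Γ,
      (∀ i ≤ 2 * u.length, c i ∈ (Cp : Set Γ) ∪ (Cm : Set Γ)) ∧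
      c (2 * u.length) = co ∧ γ = a * c 0 * a⁻¹ ∧
      ∀ i (hi : i < u.length),
        c (2 * i + 1) = (u.get ⟨i, hi⟩).2 * c (2 * i + 2) * (u.get ⟨i, hi⟩).2⁻¹ ∧
        c (2 * i) = t ^ (u.get ⟨i, hi⟩).1 * c (2 * i + 1) * (t ^ (u.get ⟨i, hi⟩).1)⁻¹ := by
  induction u using List.reverseRecOn with
  | nil =>
    intro a co hred hco hγ
    rw [hnnProd_nil] at hγ
    refine ⟨hγ ▸ mul_mem (mul_mem hred.1 (union_mem_A A Cm Cp t hH hco))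
      (inv_mem hred.1), fun _ => co, fun i _ => hco, rfl, by simpa using hγ, ?_⟩
    intro i hi; simp at hi
  | append_singleton u pr ih =>
    obtain ⟨e, g⟩ := pr
    intro a co hred hco hγ
    have hredu : HNNReducedWord A Cm Cp a u :=
      ⟨hred.1, fun p hp => hred.2.1 p (List.mem_append_left _ hp),
        (List.isChain_append.1 hred.2.2).1⟩
    have hgA : g ∈ A := (hred.2.1 (e, g) (by simp)).2
    have heA : e = 1 ∨ e = -1 := (hred.2.1 (e, g) (by simp)).1
    have hcoA : co ∈ A := union_mem_A A Cm Cp t hH hco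
    have hγ' : γ = hnnProd t a u * t ^ e * (g * co * g⁻¹) * t ^ (-e) *
        (hnnProd t a u)⁻¹ := by
      rw [hγ, hnnProd_concat]; group
    have hcx : g * co * g⁻¹ ∈ toCsub Cm Cp e :=
      crux A Cm Cp t hH γ hcyc a u e g (g * co * g⁻¹) hred
        (mul_mem (mul_mem hgA hcoA) (inv_mem hgA)) hγ'
    have hco' : t ^ e * (g * co * g⁻¹) * t ^ (-e) ∈ toCsub Cm Cp (-e) :=
      conj_mem_toCsub A Cm Cp t hH heA hcx
    have hγ'' : γ = hnnProd t a u * (t ^ e * (g * co * g⁻¹) * t ^ (-e)) *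
        (hnnProd t a u)⁻¹ := by rw [hγ']; group
    obtain ⟨hγA, c, hcmem, hclast, hc0, hcrec⟩ :=
      ih a _ hredu (toCsub_subset_union Cm Cp _ hco') hγ''
    set m := u.length with hm
    set cnew : ℕ → Γ := fun i =>
      if i = 2 * m + 1 then g * co * g⁻¹ else if i = 2 * m + 2 then co else c i
      with hcnew
    have E1 : cnew (2 * m + 1) = g * co * g⁻¹ := by simp [hcnew]
    have E2 : cnew (2 * m + 2) = co := by simp [hcnew]
    have E3 : ∀ j, j ≤ 2 * m → cnew j = c j := by
      intro j hj
      simp only [hcnew]; rw [if_neg (by omega), if_neg (by omega)]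
    have hlen : (u ++ [(e, g)]).length = m + 1 := by simp [hm]
    refine ⟨hγA, cnew, ?_, ?_, ?_, ?_⟩
    · intro i hi
      rw [hlen] at hi
      by_cases h1 : i = 2 * m + 1
      · rw [h1, E1]; exact toCsub_subset_union Cm Cp _ hcx
      · by_cases h2 : i = 2 * m + 2
        · rw [h2, E2]; exact hco
        · rw [E3 i (by omega)]; exact hcmem i (by omega)
    · rw [hlen, show 2 * (m + 1) = 2 * m + 2 from by ring, E2]
    · rw [E3 0 (by omega)]; exact hc0
    · intro i hi
      rw [hlen] at hi
      rcases Nat.lt_succ_iff_lt_or_eq.1 hi with hi' | rfl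
      · have hget : (u ++ [(e, g)]).get ⟨i, by rw [hlen]; omega⟩
            = u.get ⟨i, hi'⟩ := by
          simp [List.getElem_append_left hi']
        rw [hget, E3 (2 * i) (by omega), E3 (2 * i + 1) (by omega),
          E3 (2 * i + 2) (by omega)]
        exact hcrec i hi'
      · have hget : (u ++ [(e, g)]).get ⟨m, by rw [hlen]; omega⟩ = (e, g) := by
          simp [hm]
        rw [hget, E1, E2]
        refine ⟨rfl, ?_⟩
        rw [E3 (2 * m) (by omega), hclast, ← zpow_neg]
end HNNProofAux

/-- Conjugation theorem in an HNN extension, case (i): if the cyclically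
reduced element `γ` equals `h c h⁻¹` with `c ∈ C_{+1} ∪ C_{-1}` and `h` of
reduced form `h₁ t^{ε₁} h₂ ⋯ t^{εₚ} h_{p+1}`, then `γ ∈ A` and there is a
chain `(c_0, …, c_{2p})` in `C_{+1} ∪ C_{-1}` with `c_{2p} = c`,
`γ = h₁ c₀ h₁⁻¹`, `c_{2i+1} = h_{i+2} c_{2i+2} h_{i+2}⁻¹` and
`c_{2i} = t^{ε_{i+1}} c_{2i+1} t^{-ε_{i+1}}`.
Here `hs i = h_{i+2}` and `ε i = ε_{i+1}`. -/
theorem hnn_conj_into_associated_subgroup (A Cm Cp : Subgroup Γ) (t : Γ)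
    (hH : IsHNN A Cm Cp t) (γ co h : Γ) (p : ℕ)
    (h1 : Γ) (ε : Fin p → ℤ) (hs : Fin p → Γ)
    (hred : HNNReducedWord A Cm Cp h1 (List.ofFn fun i => (ε i, hs i)))
    (hprod : hnnProd t h1 (List.ofFn fun i => (ε i, hs i)) = h)
    (hcyc : HNNCyclicallyReduced A Cm Cp t γ)
    (hco : co ∈ (Cp : Set Γ) ∪ (Cm : Set Γ))
    (hconj : γ = h * co * h⁻¹) :
    γ ∈ A ∧
      ∃ c : ℕ → Γ, (∀ i ≤ 2 * p, c i ∈ (Cp : Set Γ) ∪ (Cm : Set Γ)) ∧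
        c (2 * p) = co ∧ γ = h1 * c 0 * h1⁻¹ ∧
        ∀ i : Fin p,
          c (2 * (i : ℕ) + 1) = hs i * c (2 * (i : ℕ) + 2) * (hs i)⁻¹ ∧
          c (2 * (i : ℕ)) = t ^ ε i * c (2 * (i : ℕ) + 1) * (t ^ ε i)⁻¹ := by
  have hγconj : γ = hnnProd t h1 (List.ofFn fun i => (ε i, hs i)) * co *
      (hnnProd t h1 (List.ofFn fun i => (ε i, hs i)))⁻¹ := by rw [hprod]; exact hconj
  obtain ⟨hγA, c, hcmem, hclast, hc0, hcrec⟩ :=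
    HNNProofAux.main_aux A Cm Cp t hH γ hcyc _ h1 co hred hco hγconj
  have hlen : (List.ofFn fun i => (ε i, hs i)).length = p := List.length_ofFn
  rw [hlen] at hcmem hclast
  refine ⟨hγA, c, hcmem, hclast, hc0, ?_⟩
  intro i
  have hi : (i : ℕ) < (List.ofFn fun i => (ε i, hs i)).length := by
    rw [hlen]; exact i.isLt
  have hgeti := hcrec i hi
  have hget : (List.ofFn fun i => (ε i, hs i)).get ⟨i, hi⟩ = (ε i, hs i) := by
    simp [List.get_ofFn]
  rw [hget] at hgeti
  exact hgeti
end
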